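/- arXiv:2511.11455 — 3 statements merged into one kernel-verified Lean document; each statement's English description precedes it below -/
import Mathlib

section
/- Let D_0 ⊂ D ⊂ {1,…,m} be such that {a_i : i ∈ D} is linearly independent. If M_{D_0} is nonsingular, then M_D is nonsingular. -/
open Matrix Set Topology Filter
open scoped ENNReal

namespace QPLip

variable {n m : ℕ}

/-- The quadratic objective function `(1/2) xᵀQx + cᵀx`. -/
noncomputable def obj (Q : Matrix (Fin n) (Fin n) ℝ) (c x : Fin n → ℝ) : ℝ :=
  (1 / 2) * (x ⬝ᵥ Q.mulVec x) + c ⬝ᵥ x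

/-- The feasible set `F(b) = {x : aᵢ'x ≤ bᵢ, i = 1,…,m}`. -/
def Feas (A : Matrix (Fin m) (Fin n) ℝ) (b : Fin m → ℝ) : Set (Fin n → ℝ) :=
  {x | ∀ i, A i ⬝ᵥ x ≤ b i}

/-- The argmin (optimal set) mapping `S(c,b)`. -/
noncomputable def argminSet (Q : Matrix (Fin n) (Fin n) ℝ) (A : Matrix (Fin m) (Fin n) ℝ)
    (c : Fin n → ℝ) (b : Fin m → ℝ) : Set (Fin n → ℝ) :=
  {x | x ∈ Feas A b ∧ ∀ y ∈ Feas A b, obj Q c x ≤ obj Q c y}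

/-- The active index set `I_b(x)`. -/
def activeIdx (A : Matrix (Fin m) (Fin n) ℝ) (b : Fin m → ℝ) (x : Fin n → ℝ) : Set (Fin m) :=
  {i | A i ⬝ᵥ x = b i}

/-- Conical convex hull of `{aᵢ : i ∈ D}` (equal to `{0}` when `D = ∅`). -/
def coneOf (A : Matrix (Fin m) (Fin n) ℝ) (D : Finset (Fin m)) : Set (Fin n → ℝ) :=
  {v | ∃ lam : Fin m → ℝ, (∀ i, 0 ≤ lam i) ∧ v = ∑ i ∈ D, lam i • A i}

/-- The family `M_{c,b}(x)` of minimal KKT sets of indices at `((c,b),x)`. -/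
def MinKKT (Q : Matrix (Fin n) (Fin n) ℝ) (A : Matrix (Fin m) (Fin n) ℝ)
    (c : Fin n → ℝ) (b : Fin m → ℝ) (x : Fin n → ℝ) : Set (Finset (Fin m)) :=
  {D | ↑D ⊆ activeIdx A b x ∧ -(Q.mulVec x + c) ∈ coneOf A D ∧
    ∀ D' : Finset (Fin m), D' ⊂ D → -(Q.mulVec x + c) ∉ coneOf A D'}

/-- The extended family `L_{c,b}(x)` of KKT subsets of indices. -/
def ExtKKT (Q : Matrix (Fin n) (Fin n) ℝ) (A : Matrix (Fin m) (Fin n) ℝ)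
    (c : Fin n → ℝ) (b : Fin m → ℝ) (x : Fin n → ℝ) : Set (Finset (Fin m)) :=
  {D | ↑D ⊆ activeIdx A b x ∧ LinearIndependent ℝ (fun i : D => A i.1) ∧
    -(Q.mulVec x + c) ∈ coneOf A D}

/-- Slater constraint qualification at `b`. -/
def Slater (A : Matrix (Fin m) (Fin n) ℝ) (b : Fin m → ℝ) : Prop :=
  ∃ y : Fin n → ℝ, ∀ i, A i ⬝ᵥ y < b i

/-- The Nürnberger condition at `((c,b),x)`. -/
def NCond (Q : Matrix (Fin n) (Fin n) ℝ) (A : Matrix (Fin m) (Fin n) ℝ)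
    (c : Fin n → ℝ) (b : Fin m → ℝ) (x : Fin n → ℝ) : Prop :=
  Slater A b ∧ ∀ D : Finset (Fin m), ↑D ⊆ activeIdx A b x →
    -(Q.mulVec x + c) ∈ coneOf A D → n ≤ D.card

/-- The submatrix `A_D` of `A` formed by the rows indexed by `D`. -/
def subA (A : Matrix (Fin m) (Fin n) ℝ) (D : Finset (Fin m)) : Matrix D (Fin n) ℝ :=
  Matrix.of fun i j => A i.1 j

/-- The KKT matrix `M_D = [[Q, A_Dᵀ],[A_D, 0]]`. -/
noncomputable def MD (Q : Matrix (Fin n) (Fin n) ℝ) (A : Matrix (Fin m) (Fin n) ℝ)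
    (D : Finset (Fin m)) : Matrix (Fin n ⊕ D) (Fin n ⊕ D) ℝ :=
  Matrix.fromBlocks Q (subA A D)ᵀ (subA A D) 0

/-- The feasible set of the subproblem `P_D`. -/
def FeasD (A : Matrix (Fin m) (Fin n) ℝ) (D : Finset (Fin m)) (β : D → ℝ) :
    Set (Fin n → ℝ) :=
  {x | ∀ i : D, A i.1 ⬝ᵥ x ≤ β i}

/-- The optimal set mapping `S_D(c,β)` of the subproblem `P_D(c,β)`. -/
noncomputable def argminD (Q : Matrix (Fin n) (Fin n) ℝ) (A : Matrix (Fin m) (Fin n) ℝ)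
    (D : Finset (Fin m)) (c : Fin n → ℝ) (β : D → ℝ) : Set (Fin n → ℝ) :=
  {x | x ∈ FeasD A D β ∧ ∀ y ∈ FeasD A D β, obj Q c x ≤ obj Q c y}

/-- Restriction `b_D` of the right-hand side `b` to the indices in `D`. -/
def restr (b : Fin m → ℝ) (D : Finset (Fin m)) : D → ℝ := fun i => b i.1

/-- `nrm` is a norm on `ℝⁿ`. -/
structure IsNorm (nrm : (Fin n → ℝ) → ℝ) : Prop where
  definite : ∀ x, nrm x = 0 → x = 0
  smul : ∀ (t : ℝ) (x : Fin n → ℝ), nrm (t • x) = |t| * nrm x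
  triangle : ∀ x y, nrm (x + y) ≤ nrm x + nrm y

/-- The dual norm `‖c‖_* = sup {|c'y| : ‖y‖ ≤ 1}`. -/
noncomputable def dualNrm (nrm : (Fin n → ℝ) → ℝ) (c : Fin n → ℝ) : ℝ :=
  sSup {r | ∃ y, nrm y ≤ 1 ∧ r = |c ⬝ᵥ y|}

/-- Distance (with respect to the norm `nrm`) from a point to a set, with `d(x,∅) = +∞`. -/
noncomputable def dSet (nrm : (Fin n → ℝ) → ℝ) (x : Fin n → ℝ) (S : Set (Fin n → ℝ)) :
    ℝ≥0∞ :=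
  ⨅ s ∈ S, ENNReal.ofReal (nrm (x - s))

/-- The distance `max {‖c₁-c₂‖_*, ‖β₁-β₂‖_∞}` in a parameter space `ℝⁿ × ℝ^ι`. -/
noncomputable def pDist (nrm : (Fin n → ℝ) → ℝ) {ι : Type} [Fintype ι]
    (p q : (Fin n → ℝ) × (ι → ℝ)) : ℝ :=
  max (dualNrm nrm (p.1 - q.1)) ‖p.2 - q.2‖

/-- The Aubin property of a set-valued mapping `G` at `(pbar, xbar)`, where the parameter
space carries the distance `pd` and `ℝⁿ` the norm `nrm`. -/
def AubinAt {P : Type*} [TopologicalSpace P] (nrm : (Fin n → ℝ) → ℝ) (pd : P → P → ℝ)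
    (G : P → Set (Fin n → ℝ)) (pbar : P) (xbar : Fin n → ℝ) : Prop :=
  ∃ κ : ℝ, 0 ≤ κ ∧ ∃ V ∈ 𝓝 pbar, ∃ U ∈ 𝓝 xbar,
    ∀ p1 ∈ V, ∀ p2 ∈ V, ∀ x2 ∈ G p2 ∩ U,
      dSet nrm x2 (G p1) ≤ ENNReal.ofReal (κ * pd p2 p1)

/-- The Lipschitz modulus of `G` at `(pbar, xbar)`: the infimum in `[0,+∞]` of all Lipschitz
constants `κ` in the definition of the Aubin property (`+∞` if the Aubin property fails). -/
noncomputable def lipMod {P : Type*} [TopologicalSpace P] (nrm : (Fin n → ℝ) → ℝ)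
    (pd : P → P → ℝ) (G : P → Set (Fin n → ℝ)) (pbar : P) (xbar : Fin n → ℝ) : ℝ≥0∞ :=
  ⨅ κ ∈ {κ : ℝ | 0 ≤ κ ∧ ∃ V ∈ 𝓝 pbar, ∃ U ∈ 𝓝 xbar,
    ∀ p1 ∈ V, ∀ p2 ∈ V, ∀ x2 ∈ G p2 ∩ U,
      dSet nrm x2 (G p1) ≤ ENNReal.ofReal (κ * pd p2 p1)}, ENNReal.ofReal κ

/-- Strong Lipschitz stability of `G` at `pbar`: single-valuedness in a neighborhood of
`pbar` together with Lipschitz continuity there. -/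
def StrongLipStable {P : Type*} [TopologicalSpace P] (nrm : (Fin n → ℝ) → ℝ)
    (pd : P → P → ℝ) (G : P → Set (Fin n → ℝ)) (pbar : P) : Prop :=
  ∃ V ∈ 𝓝 pbar, (∀ p ∈ V, ∃! x, x ∈ G p) ∧
    ∃ κ : ℝ, 0 ≤ κ ∧ ∀ p1 ∈ V, ∀ p2 ∈ V, ∀ x1 ∈ G p1, ∀ x2 ∈ G p2,
      nrm (x1 - x2) ≤ κ * pd p1 p2

/-- The matrix `(I_n | 0_{n×|D|})`. -/
noncomputable def projMat (n : ℕ) {m : ℕ} (D : Finset (Fin m)) :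
    Matrix (Fin n) (Fin n ⊕ D) ℝ :=
  Matrix.fromCols 1 0

/-- Operator norm of a matrix from `(ℝ^ι, ‖·‖_∞)` to `(ℝⁿ, nrm)`. -/
noncomputable def opNormInf (nrm : (Fin n → ℝ) → ℝ) {ι : Type} [Fintype ι]
    (B : Matrix (Fin n) ι ℝ) : ℝ :=
  sSup {r | ∃ v : ι → ℝ, ‖v‖ ≤ 1 ∧ r = nrm (B.mulVec v)}

/-- Operator norm of a matrix from `(ℝⁿ × ℝ^ι, max {‖·‖_*, ‖·‖_∞})` to `(ℝⁿ, nrm)`. -/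
noncomputable def opNormMixed (nrm : (Fin n → ℝ) → ℝ) {ι : Type} [Fintype ι]
    (B : Matrix (Fin n) (Fin n ⊕ ι) ℝ) : ℝ :=
  sSup {r | ∃ (α : Fin n → ℝ) (β : ι → ℝ), dualNrm nrm α ≤ 1 ∧ ‖β‖ ≤ 1 ∧
    r = nrm (B.mulVec (Sum.elim α β))}


/-- The matrix `A_Dᵀ (A_D A_Dᵀ)⁻¹`, which is the two-sided inverse of `A_D` whenever
`A_D` is square and invertible. -/
noncomputable def pinvA (A : Matrix (Fin m) (Fin n) ℝ) (D : Finset (Fin m)) :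
    Matrix (Fin n) D ℝ :=
  (subA A D)ᵀ * ((subA A D) * (subA A D)ᵀ)⁻¹

end QPLip

open QPLip


/-- for `D₀ ⊆ D` with `{aᵢ : i ∈ D}` linearly independent, if `M_{D₀}` is
nonsingular then so is `M_D`. -/
theorem statement13 {n m : ℕ} (hn : 0 < n) (hm : 0 < m)
    (Q : Matrix (Fin n) (Fin n) ℝ) (hQ : Q.PosSemidef)
    (A : Matrix (Fin m) (Fin n) ℝ) (D0 D : Finset (Fin m)) (hsub : D0 ⊆ D)
    (hli : LinearIndependent ℝ (fun i : D => A i.1))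
    (hD0 : IsUnit (MD Q A D0)) :
    IsUnit (MD Q A D) := by
  classical
  rw [Matrix.isUnit_iff_isUnit_det, isUnit_iff_ne_zero]
  intro hdet
  obtain ⟨v, hv, hMv⟩ := Matrix.exists_mulVec_eq_zero_iff.mpr hdet
  set x : Fin n → ℝ := v ∘ Sum.inl with hx
  set y : D → ℝ := v ∘ Sum.inr with hy
  have hv' : v = Sum.elim x y := (Sum.elim_comp_inl_inr v).symm
  rw [hv', MD, Matrix.fromBlocks_mulVec] at hMv
  have h1 : Q *ᵥ x + (subA A D)ᵀ *ᵥ y = 0 := funext fun i => congrFun hMv (Sum.inl i)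
  have h2 : (subA A D) *ᵥ x = 0 := by
    have := funext fun i => congrFun hMv (Sum.inr i)
    exact funext fun i => by simpa using congrFun this i
  have hxQx : x ⬝ᵥ Q *ᵥ x = 0 := by
    have h3 : x ⬝ᵥ (Q *ᵥ x + (subA A D)ᵀ *ᵥ y) = 0 := by rw [h1, dotProduct_zero]
    rw [dotProduct_add, Matrix.dotProduct_mulVec x (subA A D)ᵀ y,
      Matrix.vecMul_transpose, h2, zero_dotProduct, add_zero] at h3
    exact h3
  have hQx : Q *ᵥ x = 0 := (hQ.dotProduct_mulVec_zero_iff x).mp (by simpa using hxQx)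
  have hAty : (subA A D)ᵀ *ᵥ y = 0 := by
    have := h1
    rw [hQx, zero_add] at this
    exact this
  have hsum : ∑ i : D, y i • (fun j => A i.1 j) = 0 := by
    funext j
    have := congrFun hAty j
    simpa [Matrix.mulVec, dotProduct, subA, mul_comm, Finset.sum_apply] using this
  have hy0 : ∀ i, y i = 0 := Fintype.linearIndependent_iff.mp hli y hsum
  have hxne : x ≠ 0 := by
    intro hx0
    apply hv
    rw [hv', hx0]
    funext i
    cases i with
    | inl i => rfl
    | inr i => exact hy0 i
  have hwne : Sum.elim x (0 : D0 → ℝ) ≠ 0 := by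
    intro h
    apply hxne
    funext i
    exact congrFun h (Sum.inl i)
  have hMw : (MD Q A D0) *ᵥ Sum.elim x (0 : D0 → ℝ) = 0 := by
    rw [MD, Matrix.fromBlocks_mulVec]
    funext i
    cases i with
    | inl i => simp [hQx]
    | inr i =>
      have h4 := congrFun h2 ⟨i.1, hsub i.2⟩
      simp only [Matrix.mulVec_zero, add_zero, Pi.zero_apply] at h4 ⊢
      simp [subA, Matrix.mulVec, dotProduct] at h4 ⊢
      exact h4
  have hdet0 : (MD Q A D0).det = 0 :=
    Matrix.exists_mulVec_eq_zero_iff.mp ⟨_, hwne, hMw⟩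
  rw [Matrix.isUnit_iff_isUnit_det, hdet0] at hD0
  exact (isUnit_iff_ne_zero.mp hD0) rfl
end

section
/- Let (c,b) ∈ ℝ^n × ℝ^m be such that S(c,b) is a singleton {x} and the Slater constraint qualification holds at b. Then S is Hausdorff lower semicontinuous at (c,b): for every ε > 0 there exists δ > 0 such that whenever ‖c̃ − c‖_* < δ and ‖b̃ − b‖_∞ < δ, one has S(c̃,b̃) ≠ ∅ and d(x, S(c̃,b̃)) ≤ ε. -/
open Matrix Set Topology Filter
open scoped ENNReal

open QPLip


section Aux

open Matrix QPLip

variable {n m : ℕ} {nrm : (Fin n → ℝ) → ℝ}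

lemma nrm_zero (h : IsNorm nrm) : nrm 0 = 0 := by
  have := h.smul 0 0; simpa using this

lemma nrm_neg (h : IsNorm nrm) (x : Fin n → ℝ) : nrm (-x) = nrm x := by
  have := h.smul (-1) x; simpa using this

lemma nrm_nonneg (h : IsNorm nrm) (x : Fin n → ℝ) : 0 ≤ nrm x := by
  have h1 := h.triangle x (-x)
  rw [add_neg_cancel, nrm_zero h, nrm_neg h] at h1
  linarith

lemma nrm_sum_le (h : IsNorm nrm) {ι : Type*} (s : Finset ι) (f : ι → (Fin n → ℝ)) :
    nrm (∑ i ∈ s, f i) ≤ ∑ i ∈ s, nrm (f i) := by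
  classical
  induction s using Finset.induction with
  | empty => simp [nrm_zero h]
  | insert _ _ hi ih =>
    rw [Finset.sum_insert hi, Finset.sum_insert hi]
    exact le_trans (h.triangle _ _) (by linarith)

lemma nrm_le_normC (h : IsNorm nrm) :
    ∀ v, nrm v ≤ (∑ i, nrm (Pi.single i 1)) * ‖v‖ := by
  intro v
  have hv : v = ∑ i, (v i) • (Pi.single i (1:ℝ) : Fin n → ℝ) := by
    ext j
    rw [Finset.sum_apply]
    simp [Pi.single_apply, mul_comm]
  calc nrm v = nrm (∑ i, (v i) • (Pi.single i (1:ℝ) : Fin n → ℝ)) := by rw [← hv]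
    _ ≤ ∑ i, nrm ((v i) • (Pi.single i (1:ℝ) : Fin n → ℝ)) := nrm_sum_le h _ _
    _ = ∑ i, |v i| * nrm (Pi.single i 1) := by simp [h.smul]
    _ ≤ ∑ i, ‖v‖ * nrm (Pi.single i 1) := by
        apply Finset.sum_le_sum
        intro i _
        exact mul_le_mul_of_nonneg_right (by
          simpa using norm_le_pi_norm v i) (nrm_nonneg h _)
    _ = (∑ i, nrm (Pi.single i 1)) * ‖v‖ := by
        rw [Finset.sum_mul]; congr 1; ext i; ring

lemma nrm_continuous (h : IsNorm nrm) : Continuous nrm := by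
  set C := ∑ i, nrm (Pi.single i (1:ℝ)) with hC
  have hlip : LipschitzWith (Real.toNNReal C) nrm := by
    apply LipschitzWith.of_dist_le_mul
    intro a b
    have h1 : nrm a - nrm b ≤ nrm (a - b) := by
      have := h.triangle (a - b) b; simp at this; linarith
    have h2 : nrm b - nrm a ≤ nrm (a - b) := by
      have h4 := h.triangle (b - a) a; simp at h4
      have h5 := nrm_neg h (a - b)
      rw [neg_sub] at h5
      linarith
    rw [Real.dist_eq]
    have h3 : |nrm a - nrm b| ≤ nrm (a - b) := abs_sub_le_iff.mpr ⟨h1, h2⟩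
    calc |nrm a - nrm b| ≤ nrm (a - b) := h3
      _ ≤ C * ‖a - b‖ := nrm_le_normC h _
      _ ≤ Real.toNNReal C * dist a b := by
          rw [dist_eq_norm]
          apply mul_le_mul_of_nonneg_right _ (norm_nonneg _)
          exact Real.le_coe_toNNReal C
  exact hlip.continuous

lemma nrm_lower (hn : 0 < n) (h : IsNorm nrm) :
    ∃ μ > (0:ℝ), ∀ v, μ * ‖v‖ ≤ nrm v := by
  have hcs : IsCompact (Metric.sphere (0 : Fin n → ℝ) 1) := isCompact_sphere _ _
  have hne : (Metric.sphere (0 : Fin n → ℝ) 1).Nonempty := by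
    have : Nontrivial (Fin n → ℝ) := by
      have : Nonempty (Fin n) := ⟨⟨0, hn⟩⟩
      infer_instance
    apply NormedSpace.sphere_nonempty.mpr; norm_num
  obtain ⟨v0, hv0, hmin⟩ := hcs.exists_isMinOn hne ((nrm_continuous h).continuousOn)
  have hv0norm : ‖v0‖ = 1 := by simpa using hv0
  have hμpos : 0 < nrm v0 := by
    rcases (nrm_nonneg h v0).lt_or_eq with h1 | h1
    · exact h1
    · exfalso
      have := h.definite v0 h1.symm
      rw [this] at hv0norm; simp at hv0norm
  refine ⟨nrm v0, hμpos, fun v => ?_⟩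
  rcases eq_or_ne v 0 with rfl | hv
  · simp [nrm_zero h]
  · have hvn : (0:ℝ) < ‖v‖ := norm_pos_iff.mpr hv
    have hsph : (‖v‖⁻¹ • v) ∈ Metric.sphere (0 : Fin n → ℝ) 1 := by
      simp [norm_smul, abs_of_pos (inv_pos.mpr hvn), inv_mul_cancel₀ hvn.ne']
    have := hmin hsph
    have h2 : nrm (‖v‖⁻¹ • v) = ‖v‖⁻¹ * nrm v := by
      rw [h.smul, abs_of_pos (inv_pos.mpr hvn)]
    simp only [Set.mem_setOf_eq] at this
    rw [h2] at this
    calc nrm v0 * ‖v‖ ≤ (‖v‖⁻¹ * nrm v) * ‖v‖ := by nlinarith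
      _ = nrm v := by field_simp

lemma dual_pair (h : IsNorm nrm) (μ : ℝ) (hμ : 0 < μ) (hlow : ∀ v, μ * ‖v‖ ≤ nrm v)
    (d v : Fin n → ℝ) :
    |d ⬝ᵥ v| ≤ dualNrm nrm d * nrm v := by
  have hbdd : BddAbove {r | ∃ y, nrm y ≤ 1 ∧ r = |d ⬝ᵥ y|} := by
    refine ⟨(∑ i, |d i|) * μ⁻¹, fun r hr => ?_⟩
    obtain ⟨y, hy1, rfl⟩ := hr
    have hy2 : ‖y‖ ≤ μ⁻¹ := by
      have h1 : μ * ‖y‖ ≤ 1 := le_trans (hlow y) hy1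
      rw [inv_eq_one_div, le_div_iff₀ hμ]
      linarith
    calc |d ⬝ᵥ y| ≤ ∑ i, |d i * y i| := by
          unfold dotProduct
          exact Finset.abs_sum_le_sum_abs _ _
      _ ≤ ∑ i, |d i| * μ⁻¹ := by
          apply Finset.sum_le_sum
          intro i _
          rw [abs_mul]
          apply mul_le_mul_of_nonneg_left _ (abs_nonneg _)
          exact le_trans (norm_le_pi_norm y i) hy2
      _ = (∑ i, |d i|) * μ⁻¹ := by rw [Finset.sum_mul]
  have hmem : ∀ w, nrm w ≤ 1 → |d ⬝ᵥ w| ≤ dualNrm nrm d := fun w hw =>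
    le_csSup hbdd ⟨w, hw, rfl⟩
  rcases (nrm_nonneg h v).lt_or_eq with hv | hv
  · have hw : nrm ((nrm v)⁻¹ • v) ≤ 1 := by
      rw [h.smul, abs_of_pos (inv_pos.mpr hv), inv_mul_cancel₀ hv.ne']
    have h1 := hmem _ hw
    rw [dotProduct_smul, smul_eq_mul, abs_mul, abs_of_pos (inv_pos.mpr hv)] at h1
    calc |d ⬝ᵥ v| = nrm v * ((nrm v)⁻¹ * |d ⬝ᵥ v|) := by field_simp
      _ ≤ nrm v * dualNrm nrm d := by nlinarith
      _ = dualNrm nrm d * nrm v := mul_comm _ _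
  · have hv0 : v = 0 := h.definite v hv.symm
    subst hv0
    simp [← hv]

lemma symmQ (Q : Matrix (Fin n) (Fin n) ℝ) (hQ : Q.PosSemidef) (u v : Fin n → ℝ) :
    u ⬝ᵥ Q.mulVec v = v ⬝ᵥ Q.mulVec u := by
  have h : Qᵀ = Q := by
    have := hQ.1
    rwa [Matrix.IsHermitian, Matrix.conjTranspose_eq_transpose_of_trivial] at this
  rw [Matrix.dotProduct_mulVec, ← Matrix.mulVec_transpose, h]
  exact dotProduct_comm _ _

lemma obj_expand (Q : Matrix (Fin n) (Fin n) ℝ) (hQ : Q.PosSemidef)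
    (c z d : Fin n → ℝ) (t : ℝ) :
    obj Q c (z + t • d) = obj Q c z + t * ((Q.mulVec z + c) ⬝ᵥ d)
      + t^2 * ((1/2) * (d ⬝ᵥ Q.mulVec d)) := by
  unfold obj
  rw [Matrix.mulVec_add, Matrix.mulVec_smul]
  simp only [dotProduct_add, add_dotProduct, dotProduct_smul, smul_dotProduct, smul_eq_mul,
    smul_add]
  rw [show (Q.mulVec z) ⬝ᵥ d = z ⬝ᵥ Q.mulVec d from by
    rw [dotProduct_comm, symmQ Q hQ d z]]
  rw [symmQ Q hQ d z]
  ring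

lemma qform_nonneg (Q : Matrix (Fin n) (Fin n) ℝ) (hQ : Q.PosSemidef) (d : Fin n → ℝ) :
    0 ≤ d ⬝ᵥ Q.mulVec d := by
  have := hQ.dotProduct_mulVec_nonneg d
  simpa using this

lemma obj_cont (Q : Matrix (Fin n) (Fin n) ℝ) :
    Continuous (fun p : (Fin n → ℝ) × (Fin n → ℝ) => obj Q p.1 p.2) := by
  simp only [obj, dotProduct, Matrix.mulVec]
  fun_prop

lemma obj_cont_x (Q : Matrix (Fin n) (Fin n) ℝ) (c : Fin n → ℝ) :
    Continuous (fun x : Fin n → ℝ => obj Q c x) :=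
  (obj_cont Q).comp (Continuous.prodMk continuous_const continuous_id)

lemma feas_closed (A : Matrix (Fin m) (Fin n) ℝ) (b : Fin m → ℝ) :
    IsClosed (Feas A b) := by
  have : Feas A b = ⋂ i, {x : Fin n → ℝ | A i ⬝ᵥ x ≤ b i} := by
    ext x; simp [Feas]
  rw [this]
  apply isClosed_iInter
  intro i
  have hc : Continuous (fun x : Fin n → ℝ => A i ⬝ᵥ x) := by
    simp only [dotProduct]
    fun_prop
  exact isClosed_le hc continuous_const

/-- Local minimality on a ball around a point of the feasible set implies global
minimality, by convexity. -/
lemma local_global (Q : Matrix (Fin n) (Fin n) ℝ) (hQ : Q.PosSemidef)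
    (A : Matrix (Fin m) (Fin n) ℝ) (c' : Fin n → ℝ) (b' : Fin m → ℝ) (x : Fin n → ℝ)
    (ε' : ℝ) (z : Fin n → ℝ) (hzF : z ∈ Feas A b') (hzb : dist z x < ε')
    (hzmin : ∀ w ∈ Feas A b' ∩ Metric.closedBall x ε', obj Q c' z ≤ obj Q c' w) :
    ∀ w ∈ Feas A b', obj Q c' z ≤ obj Q c' w := by
  intro w hw
  by_contra hlt
  push_neg at hlt
  set d := w - z with hd
  set t : ℝ := min 1 ((ε' - dist z x) / (‖d‖ + 1)) with ht
  have hdn : (0:ℝ) < ‖d‖ + 1 := by positivity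
  have ht0 : 0 < t := by
    apply lt_min one_pos
    apply div_pos (by linarith) hdn
  have ht1 : t ≤ 1 := min_le_left _ _
  set zt := z + t • d with hzt
  have hztF : zt ∈ Feas A b' := by
    intro i
    have h1 : A i ⬝ᵥ zt = (1 - t) * (A i ⬝ᵥ z) + t * (A i ⬝ᵥ w) := by
      simp only [hzt, hd, dotProduct_add, dotProduct_smul, dotProduct_sub, smul_eq_mul]
      ring
    rw [h1]
    have h2 := hzF i
    have h3 := hw i
    nlinarith
  have hztB : zt ∈ Metric.closedBall x ε' := by
    rw [Metric.mem_closedBall]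
    have h1 : dist zt z = t * ‖d‖ := by
      rw [dist_eq_norm]
      simp [hzt, norm_smul, abs_of_pos ht0]
    have h2 : dist zt x ≤ dist zt z + dist z x := dist_triangle _ _ _
    have h3 : t * ‖d‖ ≤ ε' - dist z x := by
      have h4 : t ≤ (ε' - dist z x) / (‖d‖ + 1) := min_le_right _ _
      have h5 : t * ‖d‖ ≤ ((ε' - dist z x) / (‖d‖ + 1)) * ‖d‖ :=
        mul_le_mul_of_nonneg_right h4 (norm_nonneg _)
      have h6 : ((ε' - dist z x) / (‖d‖ + 1)) * ‖d‖ ≤ ε' - dist z x := by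
        rw [div_mul_eq_mul_div, div_le_iff₀ hdn]
        nlinarith [norm_nonneg d]
      linarith
    linarith
  have hkey := hzmin zt ⟨hztF, hztB⟩
  -- expansion
  have he1 := obj_expand Q hQ c' z d t
  have he2 := obj_expand Q hQ c' z d 1
  rw [one_smul, one_pow, one_mul] at he2
  have hzd : z + d = w := by simp [hd]
  rw [hzd] at he2
  set g := (Q.mulVec z + c') ⬝ᵥ d with hg
  set q := (1/2) * (d ⬝ᵥ Q.mulVec d) with hq
  have hq0 : 0 ≤ q := by
    have := qform_nonneg Q hQ d
    rw [hq]; linarith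
  -- obj w = obj z + g + q < obj z, so g + q < 0
  have hgq : g + q < 0 := by
    rw [he2] at hlt; linarith
  have htsq : t^2 * q ≤ t * q := by
    have h7 : t * t * q ≤ t * 1 * q :=
      mul_le_mul_of_nonneg_right (mul_le_mul_of_nonneg_left ht1 ht0.le) hq0
    calc t^2 * q = t * t * q := by ring
      _ ≤ t * 1 * q := h7
      _ = t * q := by ring
  have : obj Q c' zt < obj Q c' z := by
    rw [← hzt] at he1
    rw [he1]
    nlinarith
  linarith [hkey, this]

end Aux


/-- if `S(c,b) = {x}` and SCQ holds at `b`, then `S` is Hausdorff lower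
semicontinuous at `(c,b)`. -/
theorem statement15 {n m : ℕ} (hn : 0 < n) (hm : 0 < m)
    (nrm : (Fin n → ℝ) → ℝ) (hnrm : IsNorm nrm)
    (Q : Matrix (Fin n) (Fin n) ℝ) (hQ : Q.PosSemidef)
    (A : Matrix (Fin m) (Fin n) ℝ) (c : Fin n → ℝ) (b : Fin m → ℝ) (x : Fin n → ℝ)
    (hsingle : argminSet Q A c b = {x}) (hSl : Slater A b) :
    ∀ ε > (0 : ℝ), ∃ δ > (0 : ℝ), ∀ (c' : Fin n → ℝ) (b' : Fin m → ℝ),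
      dualNrm nrm (c' - c) < δ → ‖b' - b‖ < δ →
        (argminSet Q A c' b').Nonempty ∧
        dSet nrm x (argminSet Q A c' b') ≤ ENNReal.ofReal ε := by
  classical
  obtain ⟨y, hy⟩ := hSl
  have hx_mem : x ∈ argminSet Q A c b := by rw [hsingle]; exact rfl
  obtain ⟨hx_feas, hx_min⟩ := hx_mem
  obtain ⟨μ, hμ, hlow⟩ := nrm_lower hn hnrm
  set C := ∑ i, nrm (Pi.single i 1) with hCdef
  have hC0 : 0 ≤ C := Finset.sum_nonneg fun i _ => nrm_nonneg hnrm _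
  have hCle : ∀ v, nrm v ≤ C * ‖v‖ := nrm_le_normC hnrm
  intro ε hε
  by_contra hcon
  push_neg at hcon
  set ε' := ε / (C + 1) with hε'def
  have hε'pos : 0 < ε' := by positivity
  have hCε' : C * ε' ≤ ε := by
    rw [hε'def, mul_div_assoc', div_le_iff₀ (by positivity : (0:ℝ) < C + 1)]
    nlinarith
  haveI hmne : Nonempty (Fin m) := ⟨⟨0, hm⟩⟩
  set γ := Finset.univ.inf' Finset.univ_nonempty (fun i => b i - A i ⬝ᵥ y) with hγdef
  have hγpos : 0 < γ := by
    rw [hγdef, Finset.lt_inf'_iff]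
    intro i _
    linarith [hy i]
  have hγle : ∀ i, γ ≤ b i - A i ⬝ᵥ y := fun i => Finset.inf'_le _ (Finset.mem_univ i)
  set s₁ := ε' / (‖y - x‖ + ε' + 1) with hs₁def
  have hs₁pos : 0 < s₁ := by positivity
  have hs₁lt1 : s₁ < 1 := by
    rw [hs₁def, div_lt_one (by positivity)]
    linarith [norm_nonneg (y - x)]
  have hs₁norm : s₁ * ‖y - x‖ ≤ ε' := by
    rw [hs₁def, div_mul_eq_mul_div, div_le_iff₀ (by positivity)]
    nlinarith [norm_nonneg (y - x), hε'pos]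
  set δ₀ := γ * s₁ with hδ₀def
  have hδ₀pos : 0 < δ₀ := by positivity
  set δs : ℕ → ℝ := fun k => min (1/(k+1)) δ₀ with hδs
  have hδspos : ∀ k, 0 < δs k := fun k => lt_min (by positivity) hδ₀pos
  choose cs bs hdual hbk hbad using fun k => hcon (δs k) (hδspos k)
  have hδs_to : Filter.Tendsto δs Filter.atTop (nhds 0) := by
    apply squeeze_zero (fun k => (hδspos k).le) (fun k => min_le_left _ _)
    exact tendsto_one_div_add_atTop_nhds_zero_nat
  -- the δ-dependent feasible point near x
  have hwfeas : ∀ (s : ℝ), 0 < s → s ≤ s₁ → ∀ k, δs k ≤ s * γ →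
      (x + s • (y - x)) ∈ Feas A (bs k) ∩ Metric.closedBall x ε' := by
    intro s hs0 hs1 k hk
    constructor
    · intro i
      have h1 : A i ⬝ᵥ (x + s • (y - x)) = (1 - s) * (A i ⬝ᵥ x) + s * (A i ⬝ᵥ y) := by
        simp only [dotProduct_add, dotProduct_smul, dotProduct_sub, smul_eq_mul]
        ring
      have h2 := hx_feas i
      have h3 := hγle i
      have h4 : |bs k i - b i| < δs k := by
        calc |bs k i - b i| = ‖(bs k - b) i‖ := by simp [Real.norm_eq_abs]
          _ ≤ ‖bs k - b‖ := norm_le_pi_norm _ i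
          _ < δs k := hbk k
      have h5 : bs k i > b i - δs k := by
        have := abs_lt.mp h4; linarith [this.1]
      rw [h1]
      have hs1' : s ≤ 1 := le_of_lt (lt_of_le_of_lt hs1 hs₁lt1)
      nlinarith
    · rw [Metric.mem_closedBall]
      have heq : dist (x + s • (y - x)) x = s * ‖y - x‖ := by
        rw [dist_eq_norm]
        simp [norm_smul, abs_of_pos hs0]
      rw [heq]
      calc s * ‖y - x‖ ≤ s₁ * ‖y - x‖ :=
            mul_le_mul_of_nonneg_right hs1 (norm_nonneg _)
        _ ≤ ε' := hs₁norm
  -- nonemptiness and compactness of K_k, existence of minimizers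
  have hKne : ∀ k, (Feas A (bs k) ∩ Metric.closedBall x ε').Nonempty := by
    intro k
    refine ⟨x + s₁ • (y - x), hwfeas s₁ hs₁pos le_rfl k ?_⟩
    calc δs k ≤ δ₀ := min_le_right _ _
      _ = s₁ * γ := by rw [hδ₀def]; ring
  have hKcomp : ∀ k, IsCompact (Feas A (bs k) ∩ Metric.closedBall x ε') := fun k =>
    (isCompact_closedBall x ε').inter_left (feas_closed A (bs k))
  have hzex : ∀ k, ∃ zz ∈ Feas A (bs k) ∩ Metric.closedBall x ε',
      IsMinOn (obj Q (cs k)) (Feas A (bs k) ∩ Metric.closedBall x ε') zz := fun k =>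
    (hKcomp k).exists_isMinOn (hKne k) (obj_cont_x Q (cs k)).continuousOn
  choose z hzK hzmin using hzex
  -- each z k lies on the sphere
  have hsph : ∀ k, dist (z k) x = ε' := by
    intro k
    by_contra hne
    have hlt : dist (z k) x < ε' :=
      lt_of_le_of_ne (Metric.mem_closedBall.mp (hzK k).2) hne
    have hglob : ∀ w ∈ Feas A (bs k), obj Q (cs k) (z k) ≤ obj Q (cs k) w := by
      apply local_global Q hQ A (cs k) (bs k) x ε' (z k) (hzK k).1 hlt
      intro w hw
      exact hzmin k hw
    have hargmin : z k ∈ argminSet Q A (cs k) (bs k) := ⟨(hzK k).1, hglob⟩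
    have hdle : dSet nrm x (argminSet Q A (cs k) (bs k)) ≤ ENNReal.ofReal ε := by
      calc dSet nrm x (argminSet Q A (cs k) (bs k))
          ≤ ENNReal.ofReal (nrm (x - z k)) := iInf₂_le (z k) hargmin
        _ ≤ ENNReal.ofReal ε := by
            apply ENNReal.ofReal_le_ofReal
            calc nrm (x - z k) ≤ C * ‖x - z k‖ := hCle _
              _ = C * dist (z k) x := by rw [dist_eq_norm']
              _ ≤ C * ε' := mul_le_mul_of_nonneg_left hlt.le hC0
              _ ≤ ε := hCε'
    exact absurd hdle (not_le.mpr (hbad k ⟨z k, hargmin⟩))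
  -- extract a convergent subsequence on the sphere
  have hzsph : ∀ k, z k ∈ Metric.sphere x ε' := fun k => by
    rw [Metric.mem_sphere]; exact hsph k
  obtain ⟨zs, hzs_mem, φ, hφ, hconv⟩ := (isCompact_sphere x ε').tendsto_subseq hzsph
  have hφat : Filter.Tendsto φ Filter.atTop Filter.atTop := hφ.tendsto_atTop
  -- limits of the data
  have hb_to : Filter.Tendsto bs Filter.atTop (nhds b) := by
    rw [tendsto_iff_norm_sub_tendsto_zero]
    exact squeeze_zero (fun k => norm_nonneg _) (fun k => (hbk k).le) hδs_to
  have hc_to : Filter.Tendsto cs Filter.atTop (nhds c) := by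
    rw [tendsto_iff_norm_sub_tendsto_zero]
    have hbound : ∀ k, ‖cs k - c‖ ≤ δs k * C := by
      intro k
      apply (pi_norm_le_iff_of_nonneg (by positivity)).mpr
      intro j
      have h1 : (cs k - c) ⬝ᵥ (Pi.single j 1) = (cs k - c) j := by
        simp
      have h2 := dual_pair hnrm μ hμ hlow (cs k - c) (Pi.single j 1)
      rw [h1] at h2
      have h3 : nrm (Pi.single j 1) ≤ C := by
        rw [hCdef]
        exact Finset.single_le_sum (f := fun i => nrm (Pi.single i 1))
          (fun i _ => nrm_nonneg hnrm _) (Finset.mem_univ j)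
      have h5 : dualNrm nrm (cs k - c) * nrm (Pi.single j 1) ≤ δs k * C := by
        apply mul_le_mul (hdual k).le h3 (nrm_nonneg hnrm _) (hδspos k).le
      calc ‖(cs k - c) j‖ = |(cs k - c) j| := rfl
        _ ≤ dualNrm nrm (cs k - c) * nrm (Pi.single j 1) := h2
        _ ≤ δs k * C := h5
    apply squeeze_zero (fun k => norm_nonneg _) hbound
    have h6 := hδs_to.mul_const C
    rw [zero_mul] at h6
    exact h6
  have hc_toφ : Filter.Tendsto (fun k => cs (φ k)) Filter.atTop (nhds c) :=
    hc_to.comp hφat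
  have hb_toφ : Filter.Tendsto (fun k => bs (φ k)) Filter.atTop (nhds b) :=
    hb_to.comp hφat
  -- zs is feasible for b
  have hdotc : ∀ i : Fin m, Continuous (fun v : Fin n → ℝ => A i ⬝ᵥ v) := by
    intro i
    simp only [dotProduct]
    fun_prop
  have hzsF : zs ∈ Feas A b := by
    intro i
    have h1 : Filter.Tendsto (fun k => A i ⬝ᵥ z (φ k)) Filter.atTop (nhds (A i ⬝ᵥ zs)) :=
      ((hdotc i).tendsto zs).comp hconv
    have h2 : Filter.Tendsto (fun k => bs (φ k) i) Filter.atTop (nhds (b i)) :=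
      ((continuous_apply i).tendsto b).comp hb_toφ
    exact le_of_tendsto_of_tendsto' h1 h2 (fun k => (hzK (φ k)).1 i)
  -- obj Q c zs ≤ obj Q c x
  have hpair : Filter.Tendsto (fun k => (cs (φ k), z (φ k))) Filter.atTop
      (nhds (c, zs)) := hc_toφ.prodMk_nhds hconv
  have hobj_lim0 := ((obj_cont Q).tendsto (c, zs)).comp hpair
  have hobj_lim : Filter.Tendsto (fun k => obj Q (cs (φ k)) (z (φ k))) Filter.atTop
      (nhds (obj Q c zs)) := hobj_lim0.congr (fun k => rfl)
  have hws : ∀ s : ℝ, 0 < s → s ≤ s₁ → obj Q c zs ≤ obj Q c (x + s • (y - x)) := by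
    intro s hs0 hs1
    have hev : ∀ᶠ k in Filter.atTop,
        obj Q (cs (φ k)) (z (φ k)) ≤ obj Q (cs (φ k)) (x + s • (y - x)) := by
      have hev0 : ∀ᶠ k in Filter.atTop, δs (φ k) < s * γ := by
        apply (hδs_to.comp hφat).eventually_lt_const (by positivity)
      filter_upwards [hev0] with k hk
      exact hzmin (φ k) (hwfeas s hs0 hs1 (φ k) hk.le)
    have hpair2 : Filter.Tendsto (fun k => (cs (φ k), x + s • (y - x))) Filter.atTop
        (nhds (c, x + s • (y - x))) := hc_toφ.prodMk_nhds tendsto_const_nhds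
    have hrhs0 := ((obj_cont Q).tendsto (c, x + s • (y - x))).comp hpair2
    have hrhs : Filter.Tendsto (fun k => obj Q (cs (φ k)) (x + s • (y - x)))
        Filter.atTop (nhds (obj Q c (x + s • (y - x)))) := hrhs0.congr (fun k => rfl)
    exact le_of_tendsto_of_tendsto hobj_lim hrhs hev
  have hzsx : obj Q c zs ≤ obj Q c x := by
    have hcont : Filter.Tendsto (fun s : ℝ => obj Q c (x + s • (y - x)))
        (nhdsWithin 0 (Set.Ioi 0)) (nhds (obj Q c x)) := by
      have h1 : Continuous (fun s : ℝ => obj Q c (x + s • (y - x))) := by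
        apply (obj_cont_x Q c).comp
        fun_prop
      have h2 := h1.tendsto 0
      simp only [zero_smul, add_zero] at h2
      exact h2.mono_left nhdsWithin_le_nhds
    apply ge_of_tendsto hcont
    filter_upwards [Ioc_mem_nhdsGT_of_mem (Set.left_mem_Ico.mpr hs₁pos)] with s hs
    exact hws s hs.1 hs.2
  -- conclude: zs is a global minimizer for (c, b), hence zs = x, contradiction
  have hzs_argmin : zs ∈ argminSet Q A c b :=
    ⟨hzsF, fun w hw => le_trans hzsx (hx_min w hw)⟩
  rw [hsingle] at hzs_argmin
  have : zs = x := hzs_argmin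
  rw [Metric.mem_sphere, this] at hzs_mem
  simp at hzs_mem
  exact absurd hzs_mem.symm (ne_of_gt hε'pos)
end

section
/- Equip ℝ^n with the Euclidean norm ‖·‖_2 and the parameter space ℝ^n × ℝ^m with the norm ‖(z,b)‖ = max{‖z‖_2, ‖b‖_∞}. Assume the Slater constraint qualification holds at b̄ and let x̄ = P(z̄,b̄) be the Euclidean projection of z̄ on F(b̄). Then the metric projection mapping P has the Aubin property at ((z̄,b̄),x̄), for every D ∈ L_{z̄,b̄}(x̄) the matrix A_D A_D' is invertible, and lip P((z̄,b̄),x̄) = max over D ∈ L_{z̄,b̄}(x̄) of ‖( I_n − A_D'(A_D A_D')^{−1}A_D | A_D'(A_D A_D')^{−1} )‖, where L_{z̄,b̄}(x̄) := {D ⊂ I_{b̄}(x̄) : {a_i : i ∈ D} is linearly independent and z̄ − x̄ ∈ cone{a_i : i ∈ D}}, and each norm is the operator norm of the indicated partitioned n×(n+|D|) matrix from (ℝ^n × ℝ^D, max{‖·‖_2, ‖·‖_∞}) to (ℝ^n, ‖·‖_2). -/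
open Matrix Set Topology Filter
open scoped ENNReal

open QPLip


/-- The Euclidean norm on `ℝⁿ`. -/
noncomputable def eucNorm {n : ℕ} (x : Fin n → ℝ) : ℝ := Real.sqrt (x ⬝ᵥ x)

/-- The metric projection mapping: `P(z,b)` is the set of points of `F(b)` closest to `z`
in the Euclidean norm. -/
noncomputable def projSet {n m : ℕ} (A : Matrix (Fin m) (Fin n) ℝ)
    (z : Fin n → ℝ) (b : Fin m → ℝ) : Set (Fin n → ℝ) :=
  {x | x ∈ Feas A b ∧ ∀ y ∈ Feas A b, eucNorm (z - x) ≤ eucNorm (z - y)}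

/-- The distance `max {‖z₁-z₂‖₂, ‖b₁-b₂‖_∞}` on the parameter space `ℝⁿ × ℝᵐ`. -/
noncomputable def pDistE {n m : ℕ} (p q : (Fin n → ℝ) × (Fin m → ℝ)) : ℝ :=
  max (eucNorm (p.1 - q.1)) ‖p.2 - q.2‖

/-- Operator norm of a matrix from `(ℝⁿ × ℝ^ι, max {‖·‖₂, ‖·‖_∞})` to `(ℝⁿ, ‖·‖₂)`. -/
noncomputable def opNormE {n : ℕ} {ι : Type} [Fintype ι]
    (B : Matrix (Fin n) (Fin n ⊕ ι) ℝ) : ℝ :=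
  sSup {r | ∃ (α : Fin n → ℝ) (β : ι → ℝ), eucNorm α ≤ 1 ∧ ‖β‖ ≤ 1 ∧
    r = eucNorm (B.mulVec (Sum.elim α β))}

/-- The family `L_{z̄,b̄}(x̄)` for the metric projection. -/
def LprojKKT {n m : ℕ} (A : Matrix (Fin m) (Fin n) ℝ)
    (z : Fin n → ℝ) (b : Fin m → ℝ) (x : Fin n → ℝ) : Set (Finset (Fin m)) :=
  {D | ↑D ⊆ activeIdx A b x ∧ LinearIndependent ℝ (fun i : D => A i.1) ∧
    (z - x) ∈ coneOf A D}

/-- The partitioned matrix `(I_n − A_Dᵀ(A_D A_Dᵀ)⁻¹A_D | A_Dᵀ(A_D A_Dᵀ)⁻¹)`. -/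
noncomputable def projLipMat {n m : ℕ} (A : Matrix (Fin m) (Fin n) ℝ)
    (D : Finset (Fin m)) : Matrix (Fin n) (Fin n ⊕ D) ℝ :=
  Matrix.fromCols (1 - (subA A D)ᵀ * ((subA A D) * (subA A D)ᵀ)⁻¹ * subA A D)
    ((subA A D)ᵀ * ((subA A D) * (subA A D)ᵀ)⁻¹)


theorem gram_isUnit {n m : ℕ} (A : Matrix (Fin m) (Fin n) ℝ) (D : Finset (Fin m))
    (h : LinearIndependent ℝ (fun i : D => A i.1)) :
    IsUnit ((subA A D) * (subA A D)ᵀ) := by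
  rw [← Matrix.mulVec_injective_iff_isUnit]
  have key : ∀ u : D → ℝ, ((subA A D) * (subA A D)ᵀ).mulVec u = 0 → u = 0 := by
    intro u hu
    have h2 : u ⬝ᵥ ((subA A D) * (subA A D)ᵀ).mulVec u = 0 := by rw [hu]; simp
    rw [← Matrix.mulVec_mulVec, Matrix.dotProduct_mulVec, ← Matrix.mulVec_transpose] at h2
    have h3 : (subA A D)ᵀ.mulVec u = 0 := dotProduct_self_eq_zero.mp h2
    have h4 : ∑ i : D, u i • (fun j => A i.1 j) = 0 := by
      funext j
      have := congrFun h3 j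
      simpa [Matrix.mulVec, dotProduct, subA, Finset.sum_apply, mul_comm] using this
    exact funext (Fintype.linearIndependent_iff.mp h u (by simpa using h4))
  intro v w hvw
  have : ((subA A D) * (subA A D)ᵀ).mulVec (v - w) = 0 := by
    rw [Matrix.mulVec_sub, hvw, sub_self]
  exact sub_eq_zero.mp (key _ this)


namespace S19

open Matrix

variable {n m : ℕ}

lemma dot_self_nonneg (x : Fin n → ℝ) : 0 ≤ x ⬝ᵥ x :=
  Finset.sum_nonneg fun i _ => mul_self_nonneg _

lemma enorm_nonneg (x : Fin n → ℝ) : 0 ≤ eucNorm x := Real.sqrt_nonneg _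

lemma enorm_sq (x : Fin n → ℝ) : eucNorm x ^ 2 = x ⬝ᵥ x := Real.sq_sqrt (dot_self_nonneg x)

lemma enorm_zero : eucNorm (0 : Fin n → ℝ) = 0 := by
  simp [eucNorm, dotProduct]

lemma enorm_eq_zero {x : Fin n → ℝ} (h : eucNorm x = 0) : x = 0 := by
  have h2 : x ⬝ᵥ x = 0 := by
    rw [← enorm_sq, h]; ring
  funext i
  have := (Finset.sum_eq_zero_iff_of_nonneg (fun j _ => mul_self_nonneg (x j))).mp h2 i
    (Finset.mem_univ i)
  exact mul_self_eq_zero.mp this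

lemma enorm_smul (t : ℝ) (x : Fin n → ℝ) : eucNorm (t • x) = |t| * eucNorm x := by
  unfold eucNorm
  have : (t • x) ⬝ᵥ (t • x) = t ^ 2 * (x ⬝ᵥ x) := by
    simp [dotProduct, Finset.mul_sum]
    congr 1; funext i; ring
  rw [this, Real.sqrt_mul (sq_nonneg t), Real.sqrt_sq_eq_abs]

lemma enorm_neg (x : Fin n → ℝ) : eucNorm (-x) = eucNorm x := by
  have := enorm_smul (-1) x
  simpa using this

lemma abs_coord_le_enorm (x : Fin n → ℝ) (i : Fin n) : |x i| ≤ eucNorm x := by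
  rw [← Real.sqrt_sq_eq_abs]
  apply Real.sqrt_le_sqrt
  have : x i ^ 2 = (fun j => if j = i then x j * x j else 0) i := by simp [sq]
  calc x i ^ 2 = x i * x i := sq (x i) ▸ (sq (x i)).symm ▸ by ring
    _ ≤ ∑ j, x j * x j :=
      Finset.single_le_sum (f := fun j => x j * x j) (fun j _ => mul_self_nonneg _)
        (Finset.mem_univ i)

lemma cauchy_schwarz (x y : Fin n → ℝ) : |x ⬝ᵥ y| ≤ eucNorm x * eucNorm y := by
  rw [← Real.sqrt_sq_eq_abs]
  unfold eucNorm
  rw [← Real.sqrt_mul (dot_self_nonneg x)]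
  apply Real.sqrt_le_sqrt
  have := Finset.sum_mul_sq_le_sq_mul_sq Finset.univ x y
  simpa [dotProduct, sq] using this

lemma enorm_triangle (x y : Fin n → ℝ) : eucNorm (x + y) ≤ eucNorm x + eucNorm y := by
  have h1 : (x + y) ⬝ᵥ (x + y) ≤ (eucNorm x + eucNorm y) ^ 2 := by
    have hxy : x ⬝ᵥ y ≤ eucNorm x * eucNorm y := (abs_le.mp (cauchy_schwarz x y)).2
    have ex : x ⬝ᵥ x = eucNorm x ^ 2 := (enorm_sq x).symm
    have ey : y ⬝ᵥ y = eucNorm y ^ 2 := (enorm_sq y).symm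
    have expand : (x + y) ⬝ᵥ (x + y) = x ⬝ᵥ x + 2 * (x ⬝ᵥ y) + y ⬝ᵥ y := by
      simp [add_dotProduct, dotProduct_add, dotProduct_comm y x]
      ring
    rw [expand, ex, ey]; nlinarith
  calc eucNorm (x + y) = Real.sqrt ((x + y) ⬝ᵥ (x + y)) := rfl
    _ ≤ Real.sqrt ((eucNorm x + eucNorm y) ^ 2) := Real.sqrt_le_sqrt h1
    _ = eucNorm x + eucNorm y := Real.sqrt_sq (add_nonneg (enorm_nonneg x) (enorm_nonneg y))

lemma enorm_sub_le (x y z : Fin n → ℝ) : eucNorm (x - z) ≤ eucNorm (x - y) + eucNorm (y - z) := by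
  have : x - z = (x - y) + (y - z) := by abel
  rw [this]; exact enorm_triangle _ _

lemma continuous_enorm : Continuous (fun x : Fin n → ℝ => eucNorm x) := by
  apply Real.continuous_sqrt.comp
  unfold dotProduct
  exact continuous_finset_sum _ fun i _ =>
    ((continuous_apply i).mul (continuous_apply i))

lemma continuous_dot_right (v : Fin n → ℝ) :
    Continuous (fun x : Fin n → ℝ => v ⬝ᵥ x) := by
  unfold dotProduct
  exact continuous_finset_sum _ fun i _ => continuous_const.mul (continuous_apply i)

/-- Existence of the Euclidean projection on a nonempty closed set. -/
lemma proj_exists {S : Set (Fin n → ℝ)} (hne : S.Nonempty) (hcl : IsClosed S)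
    (z : Fin n → ℝ) : ∃ x ∈ S, ∀ y ∈ S, eucNorm (z - x) ≤ eucNorm (z - y) := by
  obtain ⟨s₀, hs₀⟩ := hne
  set T : Set (Fin n → ℝ) := S ∩ {y | eucNorm (z - y) ≤ eucNorm (z - s₀)} with hT
  have hTcl : IsClosed T := hcl.inter (isClosed_le
    (continuous_enorm.comp (continuous_const.sub continuous_id)) continuous_const)
  have hTbd : Bornology.IsBounded T := by
    apply Bornology.IsBounded.subset (Metric.isBounded_closedBall
      (x := z) (r := eucNorm (z - s₀)))
    intro y hy
    rw [Metric.mem_closedBall]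
    rw [dist_pi_le_iff (le_trans (enorm_nonneg _) hy.2)]
    intro i
    calc dist (y i) (z i) = |(z - y) i| := by
          rw [Real.dist_eq, abs_sub_comm]; simp
      _ ≤ eucNorm (z - y) := abs_coord_le_enorm _ _
      _ ≤ eucNorm (z - s₀) := hy.2
  have hTcp : IsCompact T := Metric.isCompact_iff_isClosed_bounded.mpr ⟨hTcl, hTbd⟩
  have hTne : T.Nonempty := ⟨s₀, hs₀, by show eucNorm (z - s₀) ≤ eucNorm (z - s₀); exact le_rfl⟩
  have hcont : ContinuousOn (fun y => eucNorm (z - y)) T :=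
    (continuous_enorm.comp (continuous_const.sub continuous_id)).continuousOn
  obtain ⟨x, hxT, hxmin⟩ := hTcp.exists_isMinOn hTne hcont
  refine ⟨x, hxT.1, fun y hy => ?_⟩
  by_cases hyT : y ∈ T
  · exact hxmin hyT
  · have : eucNorm (z - s₀) < eucNorm (z - y) := by
      by_contra hcon
      exact hyT ⟨hy, le_of_not_gt hcon⟩
    exact le_trans hxT.2 (le_of_lt this)

end S19


namespace S19

open Matrix

variable {n m : ℕ}

lemma dist_sq_expand (z x y : Fin n → ℝ) :
    (z - y) ⬝ᵥ (z - y) =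
      (z - x) ⬝ᵥ (z - x) - 2 * ((z - x) ⬝ᵥ (y - x)) + (y - x) ⬝ᵥ (y - x) := by
  simp only [sub_dotProduct, dotProduct_sub, dotProduct_comm y z,
    dotProduct_comm x z, dotProduct_comm x y]
  ring

lemma enorm_le_of_dot_le {a b : Fin n → ℝ} (h : a ⬝ᵥ a ≤ b ⬝ᵥ b) : eucNorm a ≤ eucNorm b :=
  Real.sqrt_le_sqrt h

lemma dot_le_of_enorm_le {a b : Fin n → ℝ} (h : eucNorm a ≤ eucNorm b) : a ⬝ᵥ a ≤ b ⬝ᵥ b := by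
  have := pow_le_pow_left₀ (enorm_nonneg a) h 2
  rwa [enorm_sq, enorm_sq] at this

/-- Sufficiency: feasibility + variational inequality implies minimality. -/
lemma proj_of_VI {S : Set (Fin n → ℝ)} {z x : Fin n → ℝ} (hx : x ∈ S)
    (hVI : ∀ y ∈ S, (z - x) ⬝ᵥ (y - x) ≤ 0) :
    ∀ y ∈ S, eucNorm (z - x) ≤ eucNorm (z - y) := by
  intro y hy
  apply enorm_le_of_dot_le
  rw [dist_sq_expand z x y]
  have h1 := hVI y hy
  have h2 := dot_self_nonneg (y - x)
  linarith

/-- Uniqueness: any minimizer coincides with a point satisfying the VI. -/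
lemma eq_of_VI_of_min {S : Set (Fin n → ℝ)} {z x y : Fin n → ℝ} (hx : x ∈ S)
    (hVI : ∀ w ∈ S, (z - x) ⬝ᵥ (w - x) ≤ 0) (hy : y ∈ S)
    (hymin : eucNorm (z - y) ≤ eucNorm (z - x)) : y = x := by
  have h1 : (z - y) ⬝ᵥ (z - y) ≤ (z - x) ⬝ᵥ (z - x) := dot_le_of_enorm_le hymin
  rw [dist_sq_expand z x y] at h1
  have h2 := hVI y hy
  have h3 : (y - x) ⬝ᵥ (y - x) ≤ 0 := by linarith
  have h4 : eucNorm (y - x) = 0 := by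
    unfold eucNorm
    exact Real.sqrt_eq_zero'.mpr h3
  have := enorm_eq_zero h4
  exact sub_eq_zero.mp this

/-- Necessity: a minimizer over a convex set satisfies the variational inequality. -/
lemma VI_of_proj {S : Set (Fin n → ℝ)} {z x : Fin n → ℝ} (hconv : Convex ℝ S) (hx : x ∈ S)
    (hmin : ∀ y ∈ S, eucNorm (z - x) ≤ eucNorm (z - y)) :
    ∀ y ∈ S, (z - x) ⬝ᵥ (y - x) ≤ 0 := by
  intro y hy
  set d : ℝ := (z - x) ⬝ᵥ (y - x) with hd
  set N : ℝ := (y - x) ⬝ᵥ (y - x) with hN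
  have hN0 : 0 ≤ N := dot_self_nonneg _
  have key : ∀ t : ℝ, 0 < t → t ≤ 1 → 2 * t * d ≤ t ^ 2 * N := by
    intro t ht0 ht1
    have hw : x + t • (y - x) ∈ S := by
      have h2 : x + t • (y - x) = (1 - t) • x + t • y := by
        funext j; simp [Pi.add_apply, Pi.smul_apply, Pi.sub_apply, smul_eq_mul]; ring
      rw [h2]
      exact hconv hx hy (by linarith) (le_of_lt ht0) (by ring)
    have hle := dot_le_of_enorm_le (hmin _ hw)
    have hexp : (z - (x + t • (y - x))) ⬝ᵥ (z - (x + t • (y - x))) =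
        (z - x) ⬝ᵥ (z - x) - 2 * t * d + t ^ 2 * N := by
      rw [dist_sq_expand z x (x + t • (y - x))]
      have h5 : x + t • (y - x) - x = t • (y - x) := by abel
      rw [h5, dotProduct_smul, smul_dotProduct, dotProduct_smul]
      simp [smul_eq_mul, hd, hN]
      ring
    rw [hexp] at hle
    linarith
  by_contra hcon
  push_neg at hcon
  have ht0 : 0 < min 1 (d / (N + 1)) := by
    apply lt_min one_pos
    positivity
  have ht1 : min 1 (d / (N + 1)) ≤ 1 := min_le_left _ _
  have hk := key _ ht0 ht1
  set t := min 1 (d / (N + 1)) with htdef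
  have htd : t ≤ d / (N + 1) := min_le_right _ _
  have h6 : t ^ 2 * N ≤ t * (d / (N + 1)) * N := by
    have : t ^ 2 ≤ t * (d / (N + 1)) := by
      rw [sq]
      exact mul_le_mul_of_nonneg_left htd (le_of_lt ht0)
    exact mul_le_mul_of_nonneg_right this hN0
  have h7 : t * (d / (N + 1)) * N < t * d := by
    have hdN : (d / (N + 1)) * N < d := by
      rw [div_mul_eq_mul_div, div_lt_iff₀ (by linarith)]
      nlinarith
    calc t * (d / (N + 1)) * N = t * ((d / (N + 1)) * N) := by ring
      _ < t * d := by exact mul_lt_mul_of_pos_left hdN ht0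
  nlinarith

lemma feas_closed (A : Matrix (Fin m) (Fin n) ℝ) (b : Fin m → ℝ) : IsClosed (Feas A b) := by
  have h : Feas A b = ⋂ i, {x | A i ⬝ᵥ x ≤ b i} := by
    ext x; simp [Feas, Set.mem_iInter]
  rw [h]
  exact isClosed_iInter fun i => isClosed_le (continuous_dot_right _) continuous_const

lemma feas_convex (A : Matrix (Fin m) (Fin n) ℝ) (b : Fin m → ℝ) : Convex ℝ (Feas A b) := by
  intro x hx y hy a c ha hc hac i
  have : A i ⬝ᵥ (a • x + c • y) = a * (A i ⬝ᵥ x) + c * (A i ⬝ᵥ y) := by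
    rw [dotProduct_add, dotProduct_smul, dotProduct_smul]
    simp [smul_eq_mul]
  rw [this]
  calc a * (A i ⬝ᵥ x) + c * (A i ⬝ᵥ y) ≤ a * b i + c * b i :=
        add_le_add (mul_le_mul_of_nonneg_left (hx i) ha)
          (mul_le_mul_of_nonneg_left (hy i) hc)
    _ = b i := by rw [← add_mul, hac, one_mul]

/-- Uniqueness of metric projection. -/
lemma projSet_unique {A : Matrix (Fin m) (Fin n) ℝ} {z : Fin n → ℝ} {b : Fin m → ℝ}
    {x y : Fin n → ℝ} (hx : x ∈ projSet A z b) (hy : y ∈ projSet A z b) : y = x := by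
  have hVI := VI_of_proj (feas_convex A b) hx.1 hx.2
  exact eq_of_VI_of_min hx.1 hVI hy.1 (hy.2 x hx.1)

end S19


namespace S19

open Matrix

variable {n m : ℕ} {A : Matrix (Fin m) (Fin n) ℝ}

lemma coneOf_iff_mulVec {D : Finset (Fin m)} {v : Fin n → ℝ} :
    v ∈ coneOf A D ↔ ∃ μ : D → ℝ, (∀ i, 0 ≤ μ i) ∧ v = (subA A D)ᵀ.mulVec μ := by
  constructor
  · rintro ⟨lam, hlam, rfl⟩
    refine ⟨fun i => lam i.1, fun i => hlam i.1, ?_⟩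
    funext j
    rw [Matrix.mulVec]
    show (∑ i ∈ D, lam i • A i) j = _
    rw [Finset.sum_apply]
    rw [show (∑ i ∈ D, (lam i • A i) j) = ∑ i ∈ D.attach, lam i.1 * A i.1 j by
      rw [← Finset.sum_attach D (fun i => (lam i • A i) j)]; rfl]
    unfold dotProduct
    rw [Finset.univ_eq_attach]
    apply Finset.sum_congr rfl
    intro i _
    show lam i.1 * A i.1 j = (subA A D)ᵀ j i * lam i.1
    rw [Matrix.transpose_apply]
    show lam i.1 * A i.1 j = A i.1 j * lam i.1
    ring
  · rintro ⟨μ, hμ, rfl⟩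
    classical
    refine ⟨fun i => if h : i ∈ D then μ ⟨i, h⟩ else 0, ?_, ?_⟩
    · intro i
      by_cases h : i ∈ D
      · simp [h]; exact hμ _
      · simp [h]
    · funext j
      rw [Matrix.mulVec]
      show _ = (∑ i ∈ D, _ • A i) j
      rw [Finset.sum_apply]
      rw [show (∑ i ∈ D, ((if h : i ∈ D then μ ⟨i, h⟩ else 0) • A i) j)
          = ∑ i ∈ D.attach, μ i * A i.1 j by
        rw [← Finset.sum_attach D (fun i => ((if h : i ∈ D then μ ⟨i, h⟩ else 0) • A i) j)]
        apply Finset.sum_congr rfl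
        intro i _
        simp [i.2]]
      unfold dotProduct
      rw [Finset.univ_eq_attach]
      apply Finset.sum_congr rfl
      intro i _
      show (subA A D)ᵀ j i * μ i = μ i * A i.1 j
      rw [Matrix.transpose_apply]
      show A i.1 j * μ i = μ i * A i.1 j
      ring

lemma coneOf_zero_mem {D : Finset (Fin m)} : (0 : Fin n → ℝ) ∈ coneOf A D :=
  ⟨0, fun _ => le_refl 0, by simp⟩

lemma coneOf_add {D : Finset (Fin m)} {u v : Fin n → ℝ} (hu : u ∈ coneOf A D)
    (hv : v ∈ coneOf A D) : u + v ∈ coneOf A D := by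
  obtain ⟨l1, hl1, rfl⟩ := hu
  obtain ⟨l2, hl2, rfl⟩ := hv
  exact ⟨l1 + l2, fun i => add_nonneg (hl1 i) (hl2 i), by
    rw [← Finset.sum_add_distrib]
    apply Finset.sum_congr rfl
    intro i _
    rw [Pi.add_apply, add_smul]⟩

lemma coneOf_smul {D : Finset (Fin m)} {v : Fin n → ℝ} {t : ℝ} (ht : 0 ≤ t)
    (hv : v ∈ coneOf A D) : t • v ∈ coneOf A D := by
  obtain ⟨l, hl, rfl⟩ := hv
  refine ⟨t • l, fun i => mul_nonneg ht (hl i), ?_⟩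
  rw [Finset.smul_sum]
  apply Finset.sum_congr rfl
  intro i _
  simp [smul_smul]

lemma coneOf_convex {D : Finset (Fin m)} : Convex ℝ (coneOf A D) := by
  intro u hu v hv a c ha hc _
  exact coneOf_add (coneOf_smul ha hu) (coneOf_smul hc hv)

lemma coneOf_mem_gen {D : Finset (Fin m)} {i : Fin m} (hi : i ∈ D) : A i ∈ coneOf A D := by
  classical
  refine ⟨fun j => if j = i then 1 else 0, fun j => by positivity, ?_⟩
  rw [show (∑ j ∈ D, (if j = i then (1:ℝ) else 0) • A j)
      = ∑ j ∈ D, (if j = i then A j else 0) by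
    apply Finset.sum_congr rfl; intro j _; split <;> simp]
  rw [Finset.sum_ite_eq' D i (fun j => A j), if_pos hi]

lemma coneOf_mono {D D0 : Finset (Fin m)} (h : D ⊆ D0) : coneOf A D ⊆ coneOf A D0 := by
  classical
  rintro v ⟨lam, hlam, rfl⟩
  refine ⟨fun i => if i ∈ D then lam i else 0, fun i => ?_, ?_⟩
  · by_cases hi : i ∈ D <;> simp [hi, hlam i]
  · rw [← Finset.sum_subset h (fun i _ hi => by simp [hi])]
    apply Finset.sum_congr rfl
    intro i hi
    simp [hi]

lemma cone_erase {D0 : Finset (Fin m)} {v : Fin n → ℝ} {lam : Fin m → ℝ}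
    (hlam : ∀ i, 0 ≤ lam i) (hsum : v = ∑ i ∈ D0, lam i • A i) {i0 : Fin m}
    (hz : lam i0 = 0) : v ∈ coneOf A (D0.erase i0) :=
  ⟨lam, hlam, by rw [Finset.sum_erase _ (by rw [hz, zero_smul])]; exact hsum⟩

/-- Conical Carathéodory: every element of a finitely generated cone lies in the cone
generated by a linearly independent subfamily. -/
lemma cone_caratheodory (A : Matrix (Fin m) (Fin n) ℝ) (D0 : Finset (Fin m))
    {v : Fin n → ℝ} (hv : v ∈ coneOf A D0) :
    ∃ D : Finset (Fin m), D ⊆ D0 ∧ LinearIndependent ℝ (fun i : D => A i.1) ∧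
      v ∈ coneOf A D := by
  classical
  induction D0 using Finset.strongInductionOn with
  | _ D0 ih =>
  obtain ⟨lam, hlam, hsum⟩ := hv
  by_cases hzero : ∃ i ∈ D0, lam i = 0
  · obtain ⟨i0, hi0, hz⟩ := hzero
    obtain ⟨D, hD1, hD2, hD3⟩ := ih (D0.erase i0) (Finset.erase_ssubset hi0)
      (cone_erase hlam hsum hz)
    exact ⟨D, hD1.trans (Finset.erase_subset _ _), hD2, hD3⟩
  by_cases hli : LinearIndependent ℝ (fun i : D0 => A i.1)
  · exact ⟨D0, Finset.Subset.refl _, hli, ⟨lam, hlam, hsum⟩⟩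
  obtain ⟨g, hgsum, i₁, hgne⟩ := Fintype.not_linearIndependent_iff.mp hli
  -- make sure some coefficient is positive
  obtain ⟨g', hg'sum, i₂, hg'pos⟩ :
      ∃ g' : D0 → ℝ, (∑ i : D0, g' i • A i.1 = 0) ∧ ∃ i : D0, 0 < g' i := by
    rcases lt_or_ge 0 (g i₁) with h | h
    · exact ⟨g, hgsum, i₁, h⟩
    · refine ⟨-g, by rw [← neg_zero, ← hgsum, ← Finset.sum_neg_distrib]
        <;> simp [neg_smul], i₁, ?_⟩
      simp only [Pi.neg_apply]
      rcases lt_or_eq_of_le h with h2 | h2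
      · linarith
      · exact absurd h2 hgne
  -- the minimum ratio
  set T : Finset D0 := Finset.univ.filter (fun i => 0 < g' i) with hT
  have hTne : T.Nonempty := ⟨i₂, by simp [hT, hg'pos]⟩
  obtain ⟨istar, histar, hstar⟩ := Finset.exists_mem_eq_inf' hTne (fun i => lam i.1 / g' i)
  set tstar : ℝ := T.inf' hTne (fun i => lam i.1 / g' i) with htstar
  have histar_pos : 0 < g' istar := by
    have := histar; rw [hT, Finset.mem_filter] at this; exact this.2
  have htstar_nonneg : 0 ≤ tstar := by
    rw [hstar]
    exact div_nonneg (hlam _) (le_of_lt histar_pos)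
  -- the new coefficients
  set lam' : Fin m → ℝ := fun i => if h : i ∈ D0 then lam i - tstar * g' ⟨i, h⟩ else 0
    with hlam'
  have hlam'_nonneg : ∀ i, 0 ≤ lam' i := by
    intro i
    rw [hlam']
    by_cases h : i ∈ D0
    · simp only [dif_pos h]
      by_cases hgi : 0 < g' ⟨i, h⟩
      · have hmem : (⟨i, h⟩ : D0) ∈ T := by simp [hT, hgi]
        have := Finset.inf'_le (fun i => lam i.1 / g' i) hmem
        rw [← htstar] at this
        have h2 : tstar * g' ⟨i, h⟩ ≤ (lam i / g' ⟨i, h⟩) * g' ⟨i, h⟩ :=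
          mul_le_mul_of_nonneg_right this (le_of_lt hgi)
        rw [div_mul_cancel₀ _ (ne_of_gt hgi)] at h2
        linarith
      · push_neg at hgi
        have : tstar * g' ⟨i, h⟩ ≤ 0 := mul_nonpos_of_nonneg_of_nonpos htstar_nonneg hgi
        have := hlam i
        linarith
    · simp [dif_neg h]
  have hsum' : v = ∑ i ∈ D0, lam' i • A i := by
    rw [← Finset.sum_attach D0 (fun i => lam' i • A i)]
    have : ∀ i : D0, lam' i.1 • A i.1 = lam i.1 • A i.1 - tstar • (g' i • A i.1) := by
      intro i
      rw [hlam']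
      simp only [dif_pos i.2]
      rw [sub_smul, smul_smul]
    rw [Finset.sum_congr rfl (fun i _ => this i), Finset.sum_sub_distrib,
      ← Finset.smul_sum]
    rw [Finset.univ_eq_attach] at hg'sum
    rw [hg'sum, smul_zero, sub_zero, Finset.sum_attach D0 (fun i => lam i • A i)]
    exact hsum
  have hz' : lam' istar.1 = 0 := by
    rw [hlam']
    simp only [dif_pos istar.2]
    have : (⟨istar.1, istar.2⟩ : D0) = istar := Subtype.ext rfl
    rw [this, hstar, div_mul_cancel₀ _ (ne_of_gt histar_pos), sub_self]
  obtain ⟨D, hD1, hD2, hD3⟩ := ih (D0.erase istar.1)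
    (Finset.erase_ssubset istar.2) (cone_erase hlam'_nonneg hsum' hz')
  exact ⟨D, hD1.trans (Finset.erase_subset _ _), hD2, hD3⟩

/-- A cone generated by linearly independent vectors is closed. -/
lemma cone_closed_of_li {D : Finset (Fin m)}
    (hD : LinearIndependent ℝ (fun i : D => A i.1)) : IsClosed (coneOf A D) := by
  set f : (D → ℝ) →ₗ[ℝ] (Fin n → ℝ) := Matrix.mulVecLin (subA A D)ᵀ with hf
  have hker : LinearMap.ker f = ⊥ := by
    rw [LinearMap.ker_eq_bot']
    intro μ hμ
    have h1 : ∑ i : D, μ i • (fun j => A i.1 j) = 0 := by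
      funext j
      rw [Finset.sum_apply]
      have := congrFun hμ j
      rw [hf] at this
      simp only [Matrix.mulVecLin_apply] at this
      rw [Matrix.mulVec] at this
      unfold dotProduct at this
      simp only [Pi.zero_apply] at this ⊢
      rw [← this]
      apply Finset.sum_congr rfl
      intro i _
      show μ i • A i.1 j = (subA A D)ᵀ j i * μ i
      rw [Matrix.transpose_apply]
      show μ i * A i.1 j = A i.1 j * μ i
      ring
    funext i
    exact Fintype.linearIndependent_iff.mp hD μ h1 i
  have hemb := LinearMap.isClosedEmbedding_of_injective hker
  have horth : IsClosed {μ : D → ℝ | ∀ i, 0 ≤ μ i} := by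
    have : {μ : D → ℝ | ∀ i, 0 ≤ μ i} = ⋂ i, {μ | 0 ≤ μ i} := by
      ext μ; simp [Set.mem_iInter]
    rw [this]
    exact isClosed_iInter fun i => isClosed_le continuous_const (continuous_apply i)
  have himg : coneOf A D = f '' {μ : D → ℝ | ∀ i, 0 ≤ μ i} := by
    ext v
    rw [coneOf_iff_mulVec]
    constructor
    · rintro ⟨μ, hμ, rfl⟩
      exact ⟨μ, hμ, rfl⟩
    · rintro ⟨μ, hμ, rfl⟩
      exact ⟨μ, hμ, rfl⟩
  rw [himg]
  exact hemb.isClosedMap _ horth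

/-- Finitely generated cones are closed. -/
lemma cone_closed (A : Matrix (Fin m) (Fin n) ℝ) (D0 : Finset (Fin m)) :
    IsClosed (coneOf A D0) := by
  classical
  have hdecomp : coneOf A D0 = ⋃ D ∈ {D : Finset (Fin m) |
      D ⊆ D0 ∧ LinearIndependent ℝ (fun i : D => A i.1)}, coneOf A D := by
    ext v
    simp only [Set.mem_iUnion, Set.mem_setOf_eq]
    constructor
    · intro hv
      obtain ⟨D, h1, h2, h3⟩ := cone_caratheodory A D0 hv
      exact ⟨D, ⟨h1, h2⟩, h3⟩
    · rintro ⟨D, ⟨h1, _⟩, h3⟩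
      exact coneOf_mono h1 h3
  rw [hdecomp]
  exact Set.Finite.isClosed_biUnion (Set.toFinite _) fun D hD => cone_closed_of_li hD.2

/-- Farkas lemma. -/
lemma farkas (A : Matrix (Fin m) (Fin n) ℝ) (I : Finset (Fin m)) (c : Fin n → ℝ)
    (h : ∀ d : Fin n → ℝ, (∀ i ∈ I, A i ⬝ᵥ d ≤ 0) → c ⬝ᵥ d ≤ 0) : c ∈ coneOf A I := by
  obtain ⟨p, hpK, hpmin⟩ := proj_exists ⟨0, coneOf_zero_mem⟩ (cone_closed A I) c
  have hVI := VI_of_proj coneOf_convex hpK hpmin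
  set d : Fin n → ℝ := c - p with hd
  have hdp : d ⬝ᵥ p = 0 := by
    have h0 := hVI 0 coneOf_zero_mem
    have h2 := hVI ((2:ℝ) • p) (coneOf_smul (by norm_num) hpK)
    rw [zero_sub, dotProduct_neg] at h0
    have h3 : (2:ℝ) • p - p = p := by
      funext j; simp [Pi.smul_apply, smul_eq_mul]; ring
    rw [h3] at h2
    linarith
  have hdgen : ∀ i ∈ I, A i ⬝ᵥ d ≤ 0 := by
    intro i hi
    have := hVI (p + A i) (coneOf_add hpK (coneOf_mem_gen hi))
    rw [add_sub_cancel_left] at this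
    rwa [dotProduct_comm]
  have hcd := h d hdgen
  have hceq : c = p + d := by rw [hd]; abel
  have hdd : d ⬝ᵥ d ≤ 0 := by
    have : c ⬝ᵥ d = p ⬝ᵥ d + d ⬝ᵥ d := by rw [hceq, add_dotProduct]
    rw [this] at hcd
    rw [dotProduct_comm] at hdp
    linarith
  have : d = 0 := enorm_eq_zero (Real.sqrt_eq_zero'.mpr hdd)
  rw [hceq, this, add_zero]
  exact hpK

end S19


namespace S19

open Matrix

variable {n m : ℕ}

/-- The candidate optimal solution for the piece `D`. -/
noncomputable def xD (A : Matrix (Fin m) (Fin n) ℝ) (D : Finset (Fin m))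
    (p : (Fin n → ℝ) × (Fin m → ℝ)) : Fin n → ℝ :=
  (projLipMat A D).mulVec (Sum.elim p.1 (restr p.2 D))

/-- The candidate multiplier for the piece `D`. -/
noncomputable def lamD (A : Matrix (Fin m) (Fin n) ℝ) (D : Finset (Fin m))
    (p : (Fin n → ℝ) × (Fin m → ℝ)) : ↥D → ℝ :=
  ((subA A D) * (subA A D)ᵀ)⁻¹.mulVec ((subA A D).mulVec p.1 - restr p.2 D)

variable {A : Matrix (Fin m) (Fin n) ℝ} {D : Finset (Fin m)}

lemma subA_row (i : ↥D) (j : Fin n) : subA A D i j = A i.1 j := rfl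

section LI

variable (hli : LinearIndependent ℝ (fun i : ↥D => A i.1))

lemma gram_det_isUnit (hli : LinearIndependent ℝ (fun i : ↥D => A i.1)) :
    IsUnit ((subA A D) * (subA A D)ᵀ).det :=
  (Matrix.isUnit_iff_isUnit_det _).mp (gram_isUnit A D hli)

lemma xD_eq (hli : LinearIndependent ℝ (fun i : ↥D => A i.1))
    (p : (Fin n → ℝ) × (Fin m → ℝ)) :
    xD A D p = p.1 - (subA A D)ᵀ.mulVec (lamD A D p) := by
  unfold xD lamD projLipMat
  rw [Matrix.fromCols_mulVec_sumElim]
  rw [Matrix.sub_mulVec, Matrix.one_mulVec]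
  simp only [Matrix.mulVec_mulVec, Matrix.mulVec_sub, Matrix.mul_assoc]
  abel

lemma subA_mulVec_xD (hli : LinearIndependent ℝ (fun i : ↥D => A i.1))
    (p : (Fin n → ℝ) × (Fin m → ℝ)) :
    (subA A D).mulVec (xD A D p) = restr p.2 D := by
  rw [xD_eq hli]
  rw [Matrix.mulVec_sub, Matrix.mulVec_mulVec]
  unfold lamD
  rw [Matrix.mulVec_mulVec,
    Matrix.mul_nonsing_inv _ (gram_det_isUnit hli), Matrix.one_mulVec]
  abel

lemma xD_active (hli : LinearIndependent ℝ (fun i : ↥D => A i.1))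
    (p : (Fin n → ℝ) × (Fin m → ℝ)) (i : ↥D) :
    A i.1 ⬝ᵥ (xD A D p) = p.2 i.1 := by
  have := congrFun (subA_mulVec_xD hli p) i
  exact this

/-- Uniqueness of the KKT representation for a fixed piece `D`. -/
lemma rep_unique (hli : LinearIndependent ℝ (fun i : ↥D => A i.1))
    {p : (Fin n → ℝ) × (Fin m → ℝ)} {x : Fin n → ℝ} {μ : ↥D → ℝ}
    (hx : x = p.1 - (subA A D)ᵀ.mulVec μ)
    (hB : (subA A D).mulVec x = restr p.2 D) :
    μ = lamD A D p ∧ x = xD A D p := by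
  have hG : ((subA A D) * (subA A D)ᵀ).mulVec μ = (subA A D).mulVec p.1 - restr p.2 D := by
    rw [← hB, hx, Matrix.mulVec_sub, Matrix.mulVec_mulVec]
    abel
  have hμ : μ = lamD A D p := by
    unfold lamD
    rw [← hG, Matrix.mulVec_mulVec, Matrix.nonsing_inv_mul _ (gram_det_isUnit hli),
      Matrix.one_mulVec]
  refine ⟨hμ, ?_⟩
  rw [hx, hμ, ← xD_eq hli]

lemma sub_xD_eq_cone (hli : LinearIndependent ℝ (fun i : ↥D => A i.1))
    (p : (Fin n → ℝ) × (Fin m → ℝ)) :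
    p.1 - xD A D p = (subA A D)ᵀ.mulVec (lamD A D p) := by
  rw [xD_eq hli]
  abel

end LI

lemma xD_add (p q : (Fin n → ℝ) × (Fin m → ℝ)) :
    xD A D (p + q) = xD A D p + xD A D q := by
  have harg : (Sum.elim (p + q).1 (restr (p + q).2 D) : Fin n ⊕ ↥D → ℝ)
      = Sum.elim p.1 (restr p.2 D) + Sum.elim q.1 (restr q.2 D) := by
    funext j
    cases j with
    | inl i => rfl
    | inr i => rfl
  unfold xD
  rw [harg, Matrix.mulVec_add]

lemma xD_smul (t : ℝ) (p : (Fin n → ℝ) × (Fin m → ℝ)) :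
    xD A D (t • p) = t • xD A D p := by
  have harg : (Sum.elim (t • p).1 (restr (t • p).2 D) : Fin n ⊕ ↥D → ℝ)
      = t • Sum.elim p.1 (restr p.2 D) := by
    funext j
    cases j with
    | inl i => rfl
    | inr i => rfl
  unfold xD
  rw [harg, Matrix.mulVec_smul]

lemma xD_add_smul (p q : (Fin n → ℝ) × (Fin m → ℝ)) (t : ℝ) :
    xD A D (p + t • q) = xD A D p + t • xD A D q := by
  rw [xD_add, xD_smul]

lemma lamD_add (p q : (Fin n → ℝ) × (Fin m → ℝ)) :
    lamD A D (p + q) = lamD A D p + lamD A D q := by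
  have harg : (subA A D).mulVec (p + q).1 - restr (p + q).2 D
      = ((subA A D).mulVec p.1 - restr p.2 D) + ((subA A D).mulVec q.1 - restr q.2 D) := by
    rw [show (p + q).1 = p.1 + q.1 from rfl, Matrix.mulVec_add]
    funext i
    show _ + _ - (p.2 i.1 + q.2 i.1) = _
    simp [restr]
    ring
  unfold lamD
  rw [harg, Matrix.mulVec_add]

lemma lamD_smul (t : ℝ) (p : (Fin n → ℝ) × (Fin m → ℝ)) :
    lamD A D (t • p) = t • lamD A D p := by
  have harg : (subA A D).mulVec (t • p).1 - restr (t • p).2 D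
      = t • ((subA A D).mulVec p.1 - restr p.2 D) := by
    rw [show (t • p).1 = t • p.1 from rfl, Matrix.mulVec_smul]
    funext i
    simp [restr, Pi.smul_apply, Pi.sub_apply, smul_eq_mul]
    ring
  unfold lamD
  rw [harg, Matrix.mulVec_smul]

lemma lamD_add_smul (p q : (Fin n → ℝ) × (Fin m → ℝ)) (t : ℝ) :
    lamD A D (p + t • q) = lamD A D p + t • lamD A D q := by
  rw [lamD_add, lamD_smul]

lemma continuous_mulVec_comp {X : Type*} [TopologicalSpace X] {ι κ : Type}
    [Fintype ι] [Fintype κ] (M : Matrix κ ι ℝ) {f : X → ι → ℝ} (hf : Continuous f) :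
    Continuous fun x => M.mulVec (f x) := by
  apply continuous_pi
  intro i
  show Continuous fun x => M i ⬝ᵥ f x
  unfold dotProduct
  exact continuous_finset_sum _ fun j _ =>
    continuous_const.mul ((continuous_apply j).comp hf)

lemma continuous_xD : Continuous (xD A D) := by
  apply continuous_mulVec_comp
  apply continuous_pi
  intro j
  cases j with
  | inl i =>
    show Continuous fun p : (Fin n → ℝ) × (Fin m → ℝ) => p.1 i
    exact (continuous_apply i).comp continuous_fst
  | inr i =>
    show Continuous fun p : (Fin n → ℝ) × (Fin m → ℝ) => p.2 i.1
    exact (continuous_apply i.1).comp continuous_snd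

lemma continuous_lamD : Continuous (lamD A D) := by
  apply continuous_mulVec_comp
  apply Continuous.sub
  · exact continuous_mulVec_comp _ ((continuous_pi fun i => (continuous_apply i)).comp
      continuous_fst)
  · apply continuous_pi
    intro i
    show Continuous fun p : (Fin n → ℝ) × (Fin m → ℝ) => p.2 i.1
    exact (continuous_apply i.1).comp continuous_snd

end S19


namespace S19

open Matrix

variable {n m : ℕ} {A : Matrix (Fin m) (Fin n) ℝ} {D : Finset (Fin m)}

lemma sum_dotProduct' {ι : Type*} (s : Finset ι) (f : ι → Fin n → ℝ) (v : Fin n → ℝ) :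
    (∑ i ∈ s, f i) ⬝ᵥ v = ∑ i ∈ s, f i ⬝ᵥ v := by
  unfold dotProduct
  rw [Finset.sum_comm]
  apply Finset.sum_congr rfl
  intro j _
  rw [Finset.sum_apply, Finset.sum_mul]

/-- KKT sufficiency. -/
lemma proj_of_kkt {z : Fin n → ℝ} {b : Fin m → ℝ} {x : Fin n → ℝ}
    (hfeas : x ∈ Feas A b) (hact : (↑D : Set (Fin m)) ⊆ activeIdx A b x)
    (hcone : z - x ∈ coneOf A D) : x ∈ projSet A z b := by
  refine ⟨hfeas, ?_⟩
  apply proj_of_VI hfeas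
  intro y hy
  obtain ⟨lam, hlam, heq⟩ := hcone
  rw [heq, sum_dotProduct']
  apply Finset.sum_nonpos
  intro i hi
  rw [smul_dotProduct, smul_eq_mul]
  apply mul_nonpos_of_nonneg_of_nonpos (hlam i)
  rw [dotProduct_sub]
  have hai : A i ⬝ᵥ x = b i := hact (Finset.mem_coe.mpr hi)
  rw [hai]
  linarith [hy i]

/-- KKT necessity with linearly independent multipliers. -/
lemma kkt_of_proj (hm : 0 < m) {z : Fin n → ℝ} {b : Fin m → ℝ} {x : Fin n → ℝ}
    (hx : x ∈ projSet A z b) :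
    ∃ E : Finset (Fin m), (↑E : Set (Fin m)) ⊆ activeIdx A b x ∧
      LinearIndependent ℝ (fun i : ↥E => A i.1) ∧ z - x ∈ coneOf A E := by
  classical
  set Iact : Finset (Fin m) := Finset.univ.filter (fun i => A i ⬝ᵥ x = b i) with hIact
  have hfarkas : z - x ∈ coneOf A Iact := by
    apply farkas
    intro d hd
    have hne : (Finset.univ : Finset (Fin m)).Nonempty := ⟨⟨0, hm⟩, Finset.mem_univ _⟩
    set f : Fin m → ℝ := fun i =>
      if A i ⬝ᵥ d ≤ 0 then 1 else (b i - A i ⬝ᵥ x) / (A i ⬝ᵥ d) with hf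
    have hfpos : ∀ i, 0 < f i := by
      intro i
      rw [hf]
      by_cases hcase : A i ⬝ᵥ d ≤ 0
      · simp [hcase]
      · push_neg at hcase
        simp only [if_neg (not_le.mpr hcase)]
        apply div_pos _ hcase
        have hiact : i ∉ Iact := by
          intro hmem
          rw [hIact, Finset.mem_filter] at hmem
          exact absurd (hd i (by rw [hIact, Finset.mem_filter]; exact ⟨Finset.mem_univ _, hmem.2⟩))
            (not_le.mpr hcase)
        have : A i ⬝ᵥ x ≠ b i := by
          intro heq
          exact hiact (by rw [hIact, Finset.mem_filter]; exact ⟨Finset.mem_univ _, heq⟩)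
        have := hx.1 i
        cases lt_or_eq_of_le this with
        | inl h2 => linarith
        | inr h2 => exact absurd h2 ‹A i ⬝ᵥ x ≠ b i›
    set t : ℝ := min 1 (Finset.univ.inf' hne f) with ht
    have htpos : 0 < t := by
      apply lt_min one_pos
      obtain ⟨i, _, hieq⟩ := Finset.exists_mem_eq_inf' hne f
      rw [hieq]
      exact hfpos i
    have hfeas2 : x + t • d ∈ Feas A b := by
      intro i
      have hexp : A i ⬝ᵥ (x + t • d) = A i ⬝ᵥ x + t * (A i ⬝ᵥ d) := by
        rw [dotProduct_add, dotProduct_smul, smul_eq_mul]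
      rw [hexp]
      by_cases hcase : A i ⬝ᵥ d ≤ 0
      · have : t * (A i ⬝ᵥ d) ≤ 0 := mul_nonpos_of_nonneg_of_nonpos (le_of_lt htpos) hcase
        linarith [hx.1 i]
      · push_neg at hcase
        have h1 : t ≤ f i := le_trans (min_le_right _ _) (Finset.inf'_le f (Finset.mem_univ i))
        rw [hf] at h1
        simp only [if_neg (not_le.mpr hcase)] at h1
        have h2 : t * (A i ⬝ᵥ d) ≤ b i - A i ⬝ᵥ x := by
          rw [← div_mul_cancel₀ (b i - A i ⬝ᵥ x) (ne_of_gt hcase)]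
          exact mul_le_mul_of_nonneg_right h1 (le_of_lt hcase)
        linarith
    have hVI := VI_of_proj (feas_convex A b) hx.1 hx.2 _ hfeas2
    have hsimp : x + t • d - x = t • d := by abel
    rw [hsimp, dotProduct_smul, smul_eq_mul] at hVI
    nlinarith
  obtain ⟨E, hE1, hE2, hE3⟩ := cone_caratheodory A Iact hfarkas
  refine ⟨E, ?_, hE2, hE3⟩
  intro i hi
  have := hE1 (Finset.mem_coe.mp hi)
  rw [hIact, Finset.mem_filter] at this
  exact this.2

/-- The (closed) region of the parameter space on which the piece `D` is active. -/
def RD (A : Matrix (Fin m) (Fin n) ℝ) (D : Finset (Fin m)) :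
    Set ((Fin n → ℝ) × (Fin m → ℝ)) :=
  {p | (∀ i, A i ⬝ᵥ xD A D p ≤ p.2 i) ∧ ∀ i : ↥D, 0 ≤ lamD A D p i}

lemma RD_closed : IsClosed (RD A D) := by
  have : RD A D = (⋂ i, {p : (Fin n → ℝ) × (Fin m → ℝ) | A i ⬝ᵥ xD A D p ≤ p.2 i}) ∩
      (⋂ i : ↥D, {p | 0 ≤ lamD A D p i}) := by
    ext p
    simp [RD, Set.mem_iInter]
  rw [this]
  apply IsClosed.inter
  · exact isClosed_iInter fun i => isClosed_le
      ((continuous_dot_right (A i)).comp continuous_xD)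
      ((continuous_apply i).comp continuous_snd)
  · exact isClosed_iInter fun i => isClosed_le continuous_const
      ((continuous_apply i).comp continuous_lamD)

/-- On the region `R_D` the projection is single-valued and given by `xD`. -/
lemma proj_eq_of_RD (hli : LinearIndependent ℝ (fun i : ↥D => A i.1))
    {p : (Fin n → ℝ) × (Fin m → ℝ)} (hp : p ∈ RD A D) :
    projSet A p.1 p.2 = {xD A D p} := by
  have hmem : xD A D p ∈ projSet A p.1 p.2 := by
    apply proj_of_kkt hp.1
    · intro i hi
      exact xD_active hli p ⟨i, Finset.mem_coe.mp hi⟩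
    · exact coneOf_iff_mulVec.mpr ⟨lamD A D p, hp.2, sub_xD_eq_cone hli p⟩
  ext y
  constructor
  · intro hy
    exact projSet_unique hmem hy
  · intro hy
    rw [Set.mem_singleton_iff] at hy
    rw [hy]
    exact hmem

/-- Characterization: `p̄ ∈ R_D` iff `D ∈ L(x̄)`, for linearly independent `D`. -/
lemma RD_pbar_iff {zb : Fin n → ℝ} {bb : Fin m → ℝ} {xb : Fin n → ℝ}
    (hxb : xb ∈ projSet A zb bb) (hli : LinearIndependent ℝ (fun i : ↥D => A i.1)) :
    (zb, bb) ∈ RD A D ↔ D ∈ LprojKKT A zb bb xb := by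
  constructor
  · intro hp
    have hx : xb = xD A D (zb, bb) := by
      have := proj_eq_of_RD hli hp
      rw [this] at hxb
      exact hxb
    refine ⟨?_, hli, ?_⟩
    · intro i hi
      show A i ⬝ᵥ xb = bb i
      rw [hx]
      exact xD_active hli (zb, bb) ⟨i, Finset.mem_coe.mp hi⟩
    · rw [hx]
      exact coneOf_iff_mulVec.mpr ⟨lamD A D (zb, bb), hp.2,
        sub_xD_eq_cone hli (zb, bb)⟩
  · rintro ⟨hact, -, hcone⟩
    obtain ⟨μ, hμ, hμeq⟩ := coneOf_iff_mulVec.mp hcone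
    have hxrep : xb = (zb, bb).1 - (subA A D)ᵀ.mulVec μ := by
      rw [← hμeq]
      abel
    have hBx : (subA A D).mulVec xb = restr (zb, bb).2 D := by
      funext i
      exact hact (Finset.mem_coe.mpr i.2)
    obtain ⟨hμlam, hxlam⟩ := rep_unique hli hxrep hBx
    constructor
    · intro i
      rw [← hxlam]
      exact hxb.1 i
    · intro i
      rw [← hμlam]
      exact hμ i

/-- Nonemptiness of the feasible set near a Slater point. -/
lemma feas_nonempty_of_slater (hm : 0 < m) {bb : Fin m → ℝ} (hSl : Slater A bb) :
    ∃ σ > 0, ∀ b : Fin m → ℝ, ‖b - bb‖ < σ → (Feas A b).Nonempty := by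
  obtain ⟨y, hy⟩ := hSl
  have hne : (Finset.univ : Finset (Fin m)).Nonempty := ⟨⟨0, hm⟩, Finset.mem_univ _⟩
  refine ⟨Finset.univ.inf' hne (fun i => bb i - A i ⬝ᵥ y), ?_, ?_⟩
  · obtain ⟨i, _, hieq⟩ := Finset.exists_mem_eq_inf' hne (fun i => bb i - A i ⬝ᵥ y)
    rw [hieq]
    linarith [hy i]
  · intro b hb
    refine ⟨y, fun i => ?_⟩
    have h1 : |(b - bb) i| ≤ ‖b - bb‖ := by
      rw [← Real.norm_eq_abs]
      exact norm_le_pi_norm (b - bb) i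
    have h2 : Finset.univ.inf' hne (fun i => bb i - A i ⬝ᵥ y) ≤ bb i - A i ⬝ᵥ y :=
      Finset.inf'_le _ (Finset.mem_univ i)
    have h3 : |(b - bb) i| < bb i - A i ⬝ᵥ y := lt_of_le_of_lt h1 (lt_of_lt_of_le hb h2)
    have h4 : -(b i - bb i) ≤ |(b - bb) i| := by
      rw [show (b - bb) i = b i - bb i from rfl]
      exact neg_le_abs _
    linarith

/-- The master neighborhood: a ball around `p̄` on which the projection is single-valued
and given by pieces from `L(x̄)`. -/
lemma exists_good_ball (hm : 0 < m) {zb : Fin n → ℝ} {bb : Fin m → ℝ} {xb : Fin n → ℝ}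
    (hSl : Slater A bb) (hxb : xb ∈ projSet A zb bb) :
    ∃ ε > 0, ∀ p ∈ Metric.ball ((zb, bb) : (Fin n → ℝ) × (Fin m → ℝ)) ε,
      ∃ D ∈ LprojKKT A zb bb xb, p ∈ RD A D ∧ projSet A p.1 p.2 = {xD A D p} := by
  classical
  obtain ⟨σ, hσpos, hσ⟩ := feas_nonempty_of_slater hm hSl
  set badF : Finset (Finset (Fin m)) := Finset.univ.filter
    (fun D => LinearIndependent ℝ (fun i : ↥D => A i.1) ∧ D ∉ LprojKKT A zb bb xb)
    with hbadF
  set V₁ : Set ((Fin n → ℝ) × (Fin m → ℝ)) :=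
    {p | ‖p.2 - bb‖ < σ} ∩ ⋂ D ∈ badF, (RD A D)ᶜ with hV₁
  have hopen : IsOpen V₁ := by
    apply IsOpen.inter
    · have : Continuous fun p : (Fin n → ℝ) × (Fin m → ℝ) => ‖p.2 - bb‖ :=
        (continuous_snd.sub continuous_const).norm
      exact isOpen_lt this continuous_const |>.mono (le_refl _) |>.mono (le_refl _)
    · exact isOpen_biInter_finset fun D _ => (RD_closed).isOpen_compl
  have hmem : ((zb, bb) : (Fin n → ℝ) × (Fin m → ℝ)) ∈ V₁ := by
    constructor
    · show ‖bb - bb‖ < σ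
      rw [sub_self, norm_zero]
      exact hσpos
    · rw [Set.mem_iInter₂]
      intro D hD
      rw [hbadF, Finset.mem_filter] at hD
      intro hcon
      exact hD.2.2 ((RD_pbar_iff hxb hD.2.1).mp hcon)
  obtain ⟨ε, hεpos, hball⟩ := Metric.isOpen_iff.mp hopen _ hmem
  refine ⟨ε, hεpos, fun p hp => ?_⟩
  have hpV := hball hp
  have hfne : (Feas A p.2).Nonempty := hσ p.2 hpV.1
  obtain ⟨x, hxmem, hxmin⟩ := proj_exists hfne (feas_closed A p.2) p.1
  have hxproj : x ∈ projSet A p.1 p.2 := ⟨hxmem, hxmin⟩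
  obtain ⟨E, hE1, hE2, hE3⟩ := kkt_of_proj hm hxproj
  obtain ⟨μ, hμ, hμeq⟩ := coneOf_iff_mulVec.mp hE3
  have hxrep : x = p.1 - (subA A E)ᵀ.mulVec μ := by rw [← hμeq]; abel
  have hBx : (subA A E).mulVec x = restr p.2 E := by
    funext i
    exact hE1 (Finset.mem_coe.mpr i.2)
  obtain ⟨hμlam, hxlam⟩ := rep_unique hE2 hxrep hBx
  have hpRD : p ∈ RD A E := by
    constructor
    · intro i
      rw [← hxlam]
      exact hxmem i
    · intro i
      rw [← hμlam]
      exact hμ i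
  have hEL : E ∈ LprojKKT A zb bb xb := by
    by_contra hEL
    have : E ∈ badF := by
      rw [hbadF, Finset.mem_filter]
      exact ⟨Finset.mem_univ _, hE2, hEL⟩
    have := Set.mem_iInter₂.mp hpV.2 E this
    exact this hpRD
  exact ⟨E, hEL, hpRD, proj_eq_of_RD hE2 hpRD⟩

end S19


namespace S19

open Matrix

variable {n m : ℕ}

/-- Segment lemma: if `g` agrees with affine maps on a finite closed cover of `[0,1]`
whose slopes are bounded by `L`, then `‖g 1 - g 0‖ ≤ L`. -/
lemma segment_lemma {ι : Type*} (s : Finset ι) (g : ℝ → Fin n → ℝ) (C : ι → Set ℝ)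
    (hC : ∀ i ∈ s, IsClosed (C i))
    (hcover : ∀ t ∈ Set.Icc (0:ℝ) 1, ∃ i ∈ s, t ∈ C i)
    (a v : ι → Fin n → ℝ)
    (hg : ∀ i ∈ s, ∀ t ∈ C i ∩ Set.Icc (0:ℝ) 1, g t = a i + t • v i)
    {L : ℝ} (hL : ∀ i ∈ s, eucNorm (v i) ≤ L) :
    eucNorm (g 1 - g 0) ≤ L := by
  set S : Set ℝ := {t ∈ Set.Icc (0:ℝ) 1 | eucNorm (g t - g 0) ≤ L * t} with hS
  have h0S : (0:ℝ) ∈ S := by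
    refine ⟨⟨le_refl 0, zero_le_one⟩, ?_⟩
    rw [sub_self, enorm_zero, mul_zero]
  have hSne : S.Nonempty := ⟨0, h0S⟩
  have hSbdd : BddAbove S := ⟨1, fun t ht => ht.1.2⟩
  set u : ℝ := sSup S with hu
  have hu0 : 0 ≤ u := le_csSup hSbdd h0S
  have hu1 : u ≤ 1 := csSup_le hSne fun t ht => ht.1.2
  have huclS : u ∈ closure S := (isLUB_csSup hSne hSbdd).mem_closure hSne
  -- u belongs to S
  have huS : u ∈ S := by
    set T : Set ℝ := ⋃ i ∈ s, closure (S ∩ C i) with hT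
    have hTclosed : IsClosed T :=
      Set.Finite.isClosed_biUnion (Finset.finite_toSet s) fun i _ => isClosed_closure
    have hST : S ⊆ T := by
      intro t ht
      obtain ⟨i, hi, hti⟩ := hcover t ht.1
      exact Set.mem_biUnion hi (subset_closure ⟨ht, hti⟩)
    have huT : u ∈ T := closure_minimal hST hTclosed huclS
    obtain ⟨i₁, hi₁, hucl⟩ := by
      rw [hT] at huT
      simpa [Set.mem_iUnion] using huT
    have huC : u ∈ C i₁ :=
      closure_minimal (Set.inter_subset_right) (hC i₁ hi₁) hucl
    have hW : closure (S ∩ C i₁) ⊆ {t | eucNorm (a i₁ + t • v i₁ - g 0) ≤ L * t} := by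
      apply closure_minimal
      · rintro t ⟨htS, htC⟩
        have := hg i₁ hi₁ t ⟨htC, htS.1⟩
        show eucNorm (a i₁ + t • v i₁ - g 0) ≤ L * t
        rw [← this]
        exact htS.2
      · apply isClosed_le _ (continuous_const.mul continuous_id)
        apply continuous_enorm.comp
        apply Continuous.sub _ continuous_const
        exact continuous_const.add (continuous_id.smul continuous_const)
    have huW := hW hucl
    have hgu : g u = a i₁ + u • v i₁ := hg i₁ hi₁ u ⟨huC, hu0, hu1⟩
    exact ⟨⟨hu0, hu1⟩, by rw [hgu]; exact huW⟩
  -- u must equal 1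
  have hueq : u = 1 := by
    by_contra hne
    have hult : u < 1 := lt_of_le_of_ne hu1 hne
    set T' : Set ℝ := ⋃ i ∈ s, closure (C i ∩ Set.Ioc u 1) with hT'
    have hT'closed : IsClosed T' :=
      Set.Finite.isClosed_biUnion (Finset.finite_toSet s) fun i _ => isClosed_closure
    have hsub : Set.Ioc u 1 ⊆ T' := by
      intro t ht
      have htIcc : t ∈ Set.Icc (0:ℝ) 1 := ⟨le_trans hu0 (le_of_lt ht.1), ht.2⟩
      obtain ⟨i, hi, hti⟩ := hcover t htIcc
      exact Set.mem_biUnion hi (subset_closure ⟨hti, ht⟩)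
    have huT' : u ∈ T' := by
      have h1 : u ∈ closure (Set.Ioc u 1) := by
        rw [closure_Ioc (ne_of_lt hult)]
        exact ⟨le_refl u, hu1⟩
      exact closure_minimal hsub hT'closed h1
    obtain ⟨i₀, hi₀, hucl⟩ := by
      rw [hT'] at huT'
      simpa [Set.mem_iUnion] using huT'
    have huC : u ∈ C i₀ :=
      closure_minimal (Set.inter_subset_left) (hC i₀ hi₀) hucl
    have hnonempty : (C i₀ ∩ Set.Ioc u 1).Nonempty := by
      rw [Set.nonempty_iff_ne_empty]
      intro hcon
      rw [hcon, closure_empty] at hucl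
      exact hucl
    obtain ⟨t₀, ht₀C, ht₀I⟩ := hnonempty
    have ht₀Icc : t₀ ∈ Set.Icc (0:ℝ) 1 := ⟨le_trans hu0 (le_of_lt ht₀I.1), ht₀I.2⟩
    have hgt₀ : g t₀ = a i₀ + t₀ • v i₀ := hg i₀ hi₀ t₀ ⟨ht₀C, ht₀Icc⟩
    have hgu : g u = a i₀ + u • v i₀ := hg i₀ hi₀ u ⟨huC, hu0, hu1⟩
    have hdiff : g t₀ - g u = (t₀ - u) • v i₀ := by
      rw [hgt₀, hgu]
      funext j
      simp [Pi.add_apply, Pi.smul_apply, smul_eq_mul]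
      ring
    have ht₀S : t₀ ∈ S := by
      refine ⟨ht₀Icc, ?_⟩
      calc eucNorm (g t₀ - g 0) ≤ eucNorm (g t₀ - g u) + eucNorm (g u - g 0) :=
            enorm_sub_le _ _ _
        _ ≤ (t₀ - u) * L + L * u := by
            apply add_le_add
            · rw [hdiff, enorm_smul, abs_of_nonneg (by linarith [ht₀I.1])]
              exact mul_le_mul_of_nonneg_left (hL i₀ hi₀) (by linarith [ht₀I.1])
            · exact huS.2
        _ = L * t₀ := by ring
    have := le_csSup hSbdd ht₀S
    rw [← hu] at this
    linarith [ht₀I.1]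
  have := huS.2
  rw [hueq, mul_one] at this
  exact this

end S19


namespace S19

open Matrix

variable {n m : ℕ} {A : Matrix (Fin m) (Fin n) ℝ} {D : Finset (Fin m)}

lemma enorm_le_of_coord {y : Fin n → ℝ} {c : Fin n → ℝ} (h : ∀ i, |y i| ≤ c i) :
    eucNorm y ≤ Real.sqrt (∑ i, c i ^ 2) := by
  apply Real.sqrt_le_sqrt
  apply Finset.sum_le_sum
  intro i _
  calc y i * y i = |y i| ^ 2 := by rw [sq_abs]; ring
    _ ≤ c i ^ 2 := by
        apply pow_le_pow_left₀ (abs_nonneg _) (h i)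

/-- The defining set of `opNormE`. -/
def opSet (B : Matrix (Fin n) (Fin n ⊕ ↥D) ℝ) : Set ℝ :=
  {r | ∃ (α : Fin n → ℝ) (β : ↥D → ℝ), eucNorm α ≤ 1 ∧ ‖β‖ ≤ 1 ∧
    r = eucNorm (B.mulVec (Sum.elim α β))}

lemma opNormE_eq_sSup (B : Matrix (Fin n) (Fin n ⊕ ↥D) ℝ) :
    opNormE B = sSup (opSet B) := rfl

lemma opSet_zero_mem (B : Matrix (Fin n) (Fin n ⊕ ↥D) ℝ) : (0:ℝ) ∈ opSet B := by
  refine ⟨0, 0, by rw [enorm_zero]; exact zero_le_one, by simp, ?_⟩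
  have : (Sum.elim (0 : Fin n → ℝ) (0 : ↥D → ℝ) : Fin n ⊕ ↥D → ℝ) = 0 := by
    funext j; cases j <;> rfl
  rw [this, Matrix.mulVec_zero, enorm_zero]

lemma opSet_bddAbove (B : Matrix (Fin n) (Fin n ⊕ ↥D) ℝ) : BddAbove (opSet B) := by
  refine ⟨Real.sqrt (∑ i, (∑ j, |B i j|) ^ 2), ?_⟩
  rintro r ⟨α, β, hα, hβ, rfl⟩
  apply enorm_le_of_coord
  intro i
  calc |(B.mulVec (Sum.elim α β)) i| = |∑ j, B i j * (Sum.elim α β) j| := rfl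
    _ ≤ ∑ j, |B i j * (Sum.elim α β) j| := Finset.abs_sum_le_sum_abs _ _
    _ ≤ ∑ j, |B i j| := by
        apply Finset.sum_le_sum
        intro j _
        rw [abs_mul]
        apply mul_le_of_le_one_right (abs_nonneg _)
        cases j with
        | inl k => exact le_trans (abs_coord_le_enorm α k) hα
        | inr k =>
          calc |β k| = ‖β k‖ := (Real.norm_eq_abs _).symm
            _ ≤ ‖β‖ := norm_le_pi_norm β k
            _ ≤ 1 := hβ

lemma opNormE_nonneg (B : Matrix (Fin n) (Fin n ⊕ ↥D) ℝ) : 0 ≤ opNormE B :=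
  le_csSup (opSet_bddAbove B) (opSet_zero_mem B)

lemma le_opNormE {B : Matrix (Fin n) (Fin n ⊕ ↥D) ℝ} {r : ℝ} (hr : r ∈ opSet B) :
    r ≤ opNormE B :=
  le_csSup (opSet_bddAbove B) hr

lemma mulVec_le_opNormE (B : Matrix (Fin n) (Fin n ⊕ ↥D) ℝ) (α : Fin n → ℝ) (β : ↥D → ℝ)
    {c : ℝ} (hα : eucNorm α ≤ c) (hβ : ‖β‖ ≤ c) :
    eucNorm (B.mulVec (Sum.elim α β)) ≤ opNormE B * c := by
  have hc0 : 0 ≤ c := le_trans (enorm_nonneg α) hα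
  rcases eq_or_lt_of_le hc0 with hc | hc
  · have hα0 : α = 0 := enorm_eq_zero (le_antisymm (hc ▸ hα) (enorm_nonneg α))
    have hβ0 : β = 0 := norm_le_zero_iff.mp (hc ▸ hβ)
    rw [hα0, hβ0]
    have : (Sum.elim (0 : Fin n → ℝ) (0 : ↥D → ℝ) : Fin n ⊕ ↥D → ℝ) = 0 := by
      funext j; cases j <;> rfl
    rw [this, Matrix.mulVec_zero, enorm_zero, ← hc, mul_zero]
  · set α' := c⁻¹ • α with hα'
    set β' := c⁻¹ • β with hβ'
    have hmem : eucNorm (B.mulVec (Sum.elim α' β')) ∈ opSet B := by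
      refine ⟨α', β', ?_, ?_, rfl⟩
      · rw [hα', enorm_smul, abs_of_nonneg (inv_nonneg.mpr (le_of_lt hc))]
        rw [inv_mul_le_iff₀ hc, mul_one]
        exact hα
      · rw [hβ', norm_smul, Real.norm_eq_abs, abs_of_nonneg (inv_nonneg.mpr (le_of_lt hc))]
        rw [inv_mul_le_iff₀ hc, mul_one]
        exact hβ
    have helim : (Sum.elim α' β' : Fin n ⊕ ↥D → ℝ) = c⁻¹ • Sum.elim α β := by
      funext j; cases j <;> rfl
    have hval : eucNorm (B.mulVec (Sum.elim α' β')) =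
        c⁻¹ * eucNorm (B.mulVec (Sum.elim α β)) := by
      rw [helim, Matrix.mulVec_smul, enorm_smul,
        abs_of_nonneg (inv_nonneg.mpr (le_of_lt hc))]
    have := le_opNormE hmem
    rw [hval] at this
    calc eucNorm (B.mulVec (Sum.elim α β)) = c * (c⁻¹ * eucNorm (B.mulVec (Sum.elim α β))) := by
          field_simp
      _ ≤ c * opNormE B := mul_le_mul_of_nonneg_left this (le_of_lt hc)
      _ = opNormE B * c := mul_comm _ _

lemma dSet_singleton (nrm : (Fin n → ℝ) → ℝ) (x a : Fin n → ℝ) :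
    dSet nrm x {a} = ENNReal.ofReal (nrm (x - a)) := by
  unfold dSet
  simp

lemma pDistE_nonneg (p q : (Fin n → ℝ) × (Fin m → ℝ)) : 0 ≤ pDistE p q :=
  le_trans (enorm_nonneg _) (le_max_left _ _)

/-- The slope bound: the affine piece for `D` has slope at most
`opNormE (projLipMat A D) * pDistE p2 p1`. -/
lemma slope_bound (A : Matrix (Fin m) (Fin n) ℝ) (D : Finset (Fin m))
    (p1 p2 : (Fin n → ℝ) × (Fin m → ℝ)) :
    eucNorm (xD A D (p2 - p1)) ≤ opNormE (projLipMat A D) * pDistE p2 p1 := by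
  have h1 : eucNorm ((p2 - p1).1) ≤ pDistE p2 p1 := le_max_left _ _
  have h2 : ‖restr (p2 - p1).2 D‖ ≤ pDistE p2 p1 := by
    apply pi_norm_le_iff_of_nonneg (pDistE_nonneg p2 p1) |>.mpr
    intro i
    calc ‖restr (p2 - p1).2 D i‖ = ‖(p2.2 - p1.2) i.1‖ := rfl
      _ ≤ ‖p2.2 - p1.2‖ := norm_le_pi_norm _ _
      _ ≤ pDistE p2 p1 := le_max_right _ _
  exact mulVec_le_opNormE _ _ _ h1 h2

end S19


namespace S19

open Matrix

variable {n m : ℕ} {A : Matrix (Fin m) (Fin n) ℝ}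

/-- Upper Lipschitz estimate on the good ball. -/
lemma upper_estimate {zb : Fin n → ℝ} {bb : Fin m → ℝ} {xb : Fin n → ℝ} {ε : ℝ}
    (hball : ∀ p ∈ Metric.ball ((zb, bb) : (Fin n → ℝ) × (Fin m → ℝ)) ε,
      ∃ D ∈ LprojKKT A zb bb xb, p ∈ RD A D ∧ projSet A p.1 p.2 = {xD A D p})
    {κs : ℝ} (hκs : ∀ D ∈ LprojKKT A zb bb xb, opNormE (projLipMat A D) ≤ κs)
    {p1 p2 : (Fin n → ℝ) × (Fin m → ℝ)}
    (hp1 : p1 ∈ Metric.ball ((zb, bb) : (Fin n → ℝ) × (Fin m → ℝ)) ε)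
    (hp2 : p2 ∈ Metric.ball ((zb, bb) : (Fin n → ℝ) × (Fin m → ℝ)) ε)
    {x1 x2 : Fin n → ℝ} (hx1 : projSet A p1.1 p1.2 = {x1})
    (hx2 : projSet A p2.1 p2.2 = {x2}) :
    eucNorm (x2 - x1) ≤ κs * pDistE p2 p1 := by
  classical
  set q : ℝ → (Fin n → ℝ) × (Fin m → ℝ) := fun t => p1 + t • (p2 - p1) with hq
  have hqmem : ∀ t ∈ Set.Icc (0:ℝ) 1, q t ∈ Metric.ball ((zb, bb)) ε := by
    intro t ht
    have hcomb := (convex_ball ((zb, bb) : (Fin n → ℝ) × (Fin m → ℝ)) ε) hp1 hp2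
      (by linarith [ht.2] : (0:ℝ) ≤ 1 - t) ht.1 (by ring)
    have heq : q t = (1 - t) • p1 + t • p2 := by
      rw [hq]
      show p1 + t • (p2 - p1) = _
      rw [smul_sub, sub_smul, one_smul]
      abel
    rw [heq]
    exact hcomb
  set g : ℝ → (Fin n → ℝ) := fun t =>
    if h : ∃ x, x ∈ projSet A (q t).1 (q t).2 then h.choose else 0 with hg
  set LF : Finset (Finset (Fin m)) :=
    Finset.univ.filter (· ∈ LprojKKT A zb bb xb) with hLF
  set C : Finset (Fin m) → Set ℝ := fun D => {t | q t ∈ RD A D} with hC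
  have hqcont : Continuous q := by
    apply Continuous.add continuous_const
    exact continuous_id.smul continuous_const
  have hCclosed : ∀ D ∈ LF, IsClosed (C D) := fun D _ => RD_closed.preimage hqcont
  have hcover : ∀ t ∈ Set.Icc (0:ℝ) 1, ∃ D ∈ LF, t ∈ C D := by
    intro t ht
    obtain ⟨D, hD, hRD, -⟩ := hball (q t) (hqmem t ht)
    exact ⟨D, by rw [hLF]; exact Finset.mem_filter.mpr ⟨Finset.mem_univ _, hD⟩, hRD⟩
  have hgaff : ∀ D ∈ LF, ∀ t ∈ C D ∩ Set.Icc (0:ℝ) 1,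
      g t = xD A D p1 + t • xD A D (p2 - p1) := by
    rintro D hD t ⟨htC, htI⟩
    have hDL : D ∈ LprojKKT A zb bb xb := by
      rw [hLF] at hD; exact (Finset.mem_filter.mp hD).2
    have hproj : projSet A (q t).1 (q t).2 = {xD A D (q t)} :=
      proj_eq_of_RD hDL.2.1 htC
    have hex : ∃ x, x ∈ projSet A (q t).1 (q t).2 := ⟨xD A D (q t), by rw [hproj]; rfl⟩
    rw [hg]
    show (if h : ∃ x, x ∈ projSet A (q t).1 (q t).2 then h.choose else 0) = _
    rw [dif_pos hex]
    have hxmem : xD A D (q t) ∈ projSet A (q t).1 (q t).2 := by rw [hproj]; rfl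
    have hch : hex.choose = xD A D (q t) := projSet_unique hxmem hex.choose_spec
    rw [hch]
    show xD A D (p1 + t • (p2 - p1)) = _
    rw [xD_add_smul]
  have hslope : ∀ D ∈ LF, eucNorm (xD A D (p2 - p1)) ≤ κs * pDistE p2 p1 := by
    intro D hD
    have hDL : D ∈ LprojKKT A zb bb xb := by
      rw [hLF] at hD; exact (Finset.mem_filter.mp hD).2
    calc eucNorm (xD A D (p2 - p1)) ≤ opNormE (projLipMat A D) * pDistE p2 p1 :=
          slope_bound A D p1 p2
      _ ≤ κs * pDistE p2 p1 :=
          mul_le_mul_of_nonneg_right (hκs D hDL) (pDistE_nonneg _ _)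
  have hseg := segment_lemma LF g C hCclosed hcover
    (fun D => xD A D p1) (fun D => xD A D (p2 - p1)) hgaff hslope
  have hq0 : q 0 = p1 := by
    rw [hq]; show p1 + (0:ℝ) • (p2 - p1) = p1; rw [zero_smul, add_zero]
  have hq1 : q 1 = p2 := by
    rw [hq]; show p1 + (1:ℝ) • (p2 - p1) = p2; rw [one_smul]; abel
  have hg0 : g 0 = x1 := by
    rw [hg]
    show (if h : ∃ x, x ∈ projSet A (q 0).1 (q 0).2 then h.choose else 0) = x1
    rw [hq0]
    have hex : ∃ x, x ∈ projSet A p1.1 p1.2 := ⟨x1, by rw [hx1]; rfl⟩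
    rw [dif_pos hex]
    have hxmem : x1 ∈ projSet A p1.1 p1.2 := by rw [hx1]; rfl
    exact projSet_unique hxmem hex.choose_spec
  have hg1 : g 1 = x2 := by
    rw [hg]
    show (if h : ∃ x, x ∈ projSet A (q 1).1 (q 1).2 then h.choose else 0) = x2
    rw [hq1]
    have hex : ∃ x, x ∈ projSet A p2.1 p2.2 := ⟨x2, by rw [hx2]; rfl⟩
    rw [dif_pos hex]
    have hxmem : x2 ∈ projSet A p2.1 p2.2 := by rw [hx2]; rfl
    exact projSet_unique hxmem hex.choose_spec
  rw [hg0, hg1] at hseg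
  exact hseg

end S19


namespace S19

open Matrix

variable {n m : ℕ} {A : Matrix (Fin m) (Fin n) ℝ}

lemma dist_add_smul_le {ι : Type} [Fintype ι] (f g : ι → ℝ) {s c : ℝ}
    (hs : 0 ≤ s) (hsc : 0 ≤ s * c) (hc : ∀ j, |g j| ≤ c) :
    dist (f + s • g) f ≤ s * c := by
  rw [dist_pi_le_iff hsc]
  intro j
  rw [Real.dist_eq]
  have : (f + s • g) j - f j = s * g j := by
    simp [Pi.add_apply, Pi.smul_apply, smul_eq_mul]
  rw [this, abs_mul, abs_of_nonneg hs]
  exact mul_le_mul_of_nonneg_left (hc j) hs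

/-- Lower estimate: each piece norm is a lower bound for every Aubin constant. -/
lemma lower_bound {zb : Fin n → ℝ} {bb : Fin m → ℝ} {xb : Fin n → ℝ}
    (hxb : xb ∈ projSet A zb bb) {D : Finset (Fin m)} (hD : D ∈ LprojKKT A zb bb xb)
    {κ : ℝ} (hκ0 : 0 ≤ κ) {V : Set ((Fin n → ℝ) × (Fin m → ℝ))}
    (hV : V ∈ 𝓝 ((zb, bb) : (Fin n → ℝ) × (Fin m → ℝ))) {U : Set (Fin n → ℝ)}
    (hU : U ∈ 𝓝 xb)
    (hprop : ∀ p1 ∈ V, ∀ p2 ∈ V, ∀ x2 ∈ (projSet A p2.1 p2.2) ∩ U,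
      dSet eucNorm x2 (projSet A p1.1 p1.2) ≤ ENNReal.ofReal (κ * pDistE p2 p1)) :
    opNormE (projLipMat A D) ≤ κ := by
  classical
  have hli := hD.2.1
  have hRD : ((zb, bb) : (Fin n → ℝ) × (Fin m → ℝ)) ∈ RD A D := (RD_pbar_iff hxb hli).mpr hD
  have hprojbar : projSet A zb bb = {xD A D (zb, bb)} := proj_eq_of_RD hli hRD
  have hxeq : xb = xD A D (zb, bb) := by rw [hprojbar, Set.mem_singleton_iff] at hxb; exact hxb
  apply Real.sSup_le _ hκ0
  rintro r ⟨α, β, hα, hβ, rfl⟩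
  set u : Fin n → ℝ := (projLipMat A D).mulVec (Sum.elim α β) with hu
  set w : Fin n → ℝ := (subA A D)ᵀ.mulVec (fun _ => 1) with hw
  set χ : Fin m → ℝ := fun i => if i ∈ D then 0 else 1 with hχ
  set βt : Fin m → ℝ := fun i => if h : i ∈ D then β ⟨i, h⟩ else 0 with hβt
  set qd : (Fin n → ℝ) × (Fin m → ℝ) := (w, χ) with hqd
  set ee : (Fin n → ℝ) × (Fin m → ℝ) := (α, βt) with hee
  have hrestrχ : restr χ D = 0 := by
    funext i
    show (if i.1 ∈ D then (0:ℝ) else 1) = 0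
    rw [if_pos i.2]
  have hrestrβ : restr βt D = β := by
    funext i
    show (if h : i.1 ∈ D then β ⟨i.1, h⟩ else 0) = β i
    rw [dif_pos i.2]
  have hlamqd : lamD A D qd = fun _ => 1 := by
    unfold lamD
    show ((subA A D) * (subA A D)ᵀ)⁻¹.mulVec ((subA A D).mulVec w - restr χ D) = _
    rw [hrestrχ, sub_zero, hw, Matrix.mulVec_mulVec, Matrix.mulVec_mulVec,
      Matrix.mul_assoc, Matrix.nonsing_inv_mul _ (gram_det_isUnit hli), Matrix.one_mulVec]
  have hxDqd : xD A D qd = 0 := by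
    rw [xD_eq hli, hlamqd]
    show w - (subA A D)ᵀ.mulVec (fun _ => 1) = 0
    rw [hw, sub_self]
  have hxDee : xD A D ee = u := by
    have harg : (Sum.elim ee.1 (restr ee.2 D) : Fin n ⊕ ↥D → ℝ) = Sum.elim α β := by
      funext j
      cases j with
      | inl k => rfl
      | inr k => exact congrFun hrestrβ k
    unfold xD
    rw [harg, hu]
  set evec : ↥D → ℝ := lamD A D ee with hevec
  set lb : ↥D → ℝ := lamD A D (zb, bb) with hlb
  have hlb0 : ∀ i : ↥D, 0 ≤ lb i := hRD.2
  -- constants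
  set Su : ℝ := ∑ i, |A i ⬝ᵥ u| with hSu
  set Se : ℝ := ∑ i : ↥D, |evec i| with hSe
  have hSu0 : 0 ≤ Su := Finset.sum_nonneg fun i _ => abs_nonneg _
  have hSe0 : 0 ≤ Se := Finset.sum_nonneg fun i _ => abs_nonneg _
  set K : ℝ := 1 + Su + Se with hK
  have hK1 : 1 ≤ K := by rw [hK]; linarith
  have hKpos : 0 < K := lt_of_lt_of_le one_pos hK1
  have hSuK : ∀ i, |A i ⬝ᵥ u| ≤ K - 1 := by
    intro i
    have := Finset.single_le_sum (f := fun i => |A i ⬝ᵥ u|)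
      (fun i _ => abs_nonneg _) (Finset.mem_univ i)
    rw [hK]; rw [← hSu] at this; linarith
  have hSeK : ∀ i : ↥D, |evec i| ≤ K - 1 := by
    intro i
    have := Finset.single_le_sum (f := fun i : ↥D => |evec i|)
      (fun i _ => abs_nonneg _) (Finset.mem_univ i)
    rw [hK]; rw [← hSe] at this; linarith
  set Cq : ℝ := (∑ j, |w j|) + 1 with hCq
  set Ce : ℝ := (∑ j, |α j|) + 1 with hCe
  set Cu : ℝ := (∑ j, |u j|) + 1 with hCu
  have hCq1 : 1 ≤ Cq := by
    rw [hCq]; have : 0 ≤ ∑ j, |w j| := Finset.sum_nonneg fun j _ => abs_nonneg _; linarith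
  have hCe1 : 1 ≤ Ce := by
    rw [hCe]; have : 0 ≤ ∑ j, |α j| := Finset.sum_nonneg fun j _ => abs_nonneg _; linarith
  have hCu1 : 1 ≤ Cu := by
    rw [hCu]; have : 0 ≤ ∑ j, |u j| := Finset.sum_nonneg fun j _ => abs_nonneg _; linarith
  set Ctot : ℝ := Cq + Ce + Cu with hCtot
  have hCtot_pos : 0 < Ctot := by rw [hCtot]; linarith
  -- radii
  obtain ⟨εV, hεV, hεVsub⟩ := Metric.mem_nhds_iff.mp hV
  obtain ⟨εU, hεU, hεUsub⟩ := Metric.mem_nhds_iff.mp hU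
  set s₀ : ℝ := min εV εU / (2 * Ctot) with hs₀
  have hs₀pos : 0 < s₀ := by
    apply div_pos (lt_min hεV hεU)
    linarith
  have hs₀C : s₀ * Ctot < min εV εU := by
    have heq : s₀ * Ctot = min εV εU / 2 := by
      rw [hs₀]
      field_simp
    rw [heq]
    exact div_lt_self (lt_min hεV hεU) one_lt_two
  set t₀ : ℝ := s₀ / K with ht₀
  have ht₀pos : 0 < t₀ := div_pos hs₀pos hKpos
  have ht₀K : t₀ * K = s₀ := div_mul_cancel₀ _ (ne_of_gt hKpos)
  have ht₀s₀ : t₀ ≤ s₀ := by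
    rw [ht₀]
    exact div_le_self hs₀pos.le hK1
  set p1 : (Fin n → ℝ) × (Fin m → ℝ) := (zb, bb) + s₀ • qd with hp1
  set p2 : (Fin n → ℝ) × (Fin m → ℝ) := p1 + t₀ • ee with hp2
  -- piece values
  have hxp1 : xD A D p1 = xb := by
    rw [hp1, xD_add_smul, hxDqd, smul_zero, add_zero, ← hxeq]
  have hxp2 : xD A D p2 = xb + t₀ • u := by
    rw [hp2, xD_add_smul, hxp1, hxDee]
  have hlamp1 : lamD A D p1 = fun i => lb i + s₀ := by
    rw [hp1, lamD_add_smul, hlamqd, ← hlb]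
    funext i
    simp [Pi.add_apply, Pi.smul_apply, smul_eq_mul]
  have hlamp2 : lamD A D p2 = fun i => lb i + s₀ + t₀ * evec i := by
    rw [hp2, lamD_add_smul, hlamp1, ← hevec]
    funext i
    simp [Pi.add_apply, Pi.smul_apply, smul_eq_mul]
  have hp12 : p1.2 = fun i => bb i + s₀ * χ i := by
    funext i
    show bb i + s₀ • χ i = _
    rw [smul_eq_mul]
  have hp22 : p2.2 = fun i => bb i + s₀ * χ i + t₀ * βt i := by
    funext i
    show p1.2 i + t₀ • βt i = _
    rw [congrFun hp12 i, smul_eq_mul]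
  -- membership in regions
  have hp1RD : p1 ∈ RD A D := by
    constructor
    · intro i
      by_cases hiD : i ∈ D
      · exact le_of_eq (xD_active hli p1 ⟨i, hiD⟩)
      · rw [hxp1, congrFun hp12 i, hχ]
        simp only [if_neg hiD, mul_one]
        linarith [hxb.1 i, hs₀pos.le]
    · intro i
      rw [hlamp1]
      have := hlb0 i
      dsimp only
      linarith [hs₀pos.le]
  have hp2RD : p2 ∈ RD A D := by
    constructor
    · intro i
      by_cases hiD : i ∈ D
      · exact le_of_eq (xD_active hli p2 ⟨i, hiD⟩)
      · rw [hxp2, congrFun hp22 i, hχ, hβt]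
        simp only [if_neg hiD, dif_neg hiD, mul_one, mul_zero, add_zero]
        have hdot : A i ⬝ᵥ (xb + t₀ • u) = A i ⬝ᵥ xb + t₀ * (A i ⬝ᵥ u) := by
          rw [dotProduct_add, dotProduct_smul, smul_eq_mul]
        rw [hdot]
        have h1 : t₀ * (A i ⬝ᵥ u) ≤ t₀ * (K - 1) := by
          apply mul_le_mul_of_nonneg_left _ ht₀pos.le
          exact le_trans (le_abs_self _) (hSuK i)
        have h2 : t₀ * (K - 1) ≤ s₀ := by
          have heq2 : t₀ * (K - 1) = s₀ - t₀ := by rw [mul_sub, ht₀K, mul_one]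
          rw [heq2]
          linarith [ht₀pos.le]
        linarith [hxb.1 i]
    · intro i
      rw [hlamp2]
      dsimp only
      have habs : -(K - 1) ≤ evec i := by
        have h5 := hSeK i
        have h6 := neg_abs_le (evec i)
        linarith
      have h1 : -(t₀ * (K - 1)) ≤ t₀ * evec i := by
        have := mul_le_mul_of_nonneg_left habs ht₀pos.le
        rw [mul_neg] at this
        linarith
      have h2 : t₀ * (K - 1) ≤ s₀ := by
        have heq2 : t₀ * (K - 1) = s₀ - t₀ := by rw [mul_sub, ht₀K, mul_one]
        rw [heq2]
        linarith [ht₀pos.le]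
      have := hlb0 i
      linarith
  have hproj1 : projSet A p1.1 p1.2 = {xb} := by
    rw [proj_eq_of_RD hli hp1RD, hxp1]
  have hproj2 : projSet A p2.1 p2.2 = {xb + t₀ • u} := by
    rw [proj_eq_of_RD hli hp2RD, hxp2]
  -- memberships in V and U
  have hp1V : p1 ∈ V := by
    apply hεVsub
    rw [Metric.mem_ball, hp1]
    have hd : dist ((zb, bb) + s₀ • qd) ((zb, bb) : (Fin n → ℝ) × (Fin m → ℝ)) ≤ s₀ * Cq := by
      rw [dist_comm, Prod.dist_eq]
      apply max_le
      · show dist zb (zb + s₀ • w) ≤ s₀ * Cq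
        rw [dist_comm]
        apply dist_add_smul_le _ _ hs₀pos.le
          (mul_nonneg hs₀pos.le (by linarith)) fun j => ?_
        rw [hCq]
        have := Finset.single_le_sum (f := fun j => |w j|)
          (fun j _ => abs_nonneg _) (Finset.mem_univ j)
        linarith
      · show dist bb (bb + s₀ • χ) ≤ s₀ * Cq
        rw [dist_comm]
        apply dist_add_smul_le _ _ hs₀pos.le
          (mul_nonneg hs₀pos.le (by linarith)) fun j => ?_
        rw [hχ]
        by_cases hj : j ∈ D <;> simp [hj] <;> linarith
    calc dist ((zb, bb) + s₀ • qd) ((zb, bb) : (Fin n → ℝ) × (Fin m → ℝ)) ≤ s₀ * Cq := hd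
      _ ≤ s₀ * Ctot := by
          apply mul_le_mul_of_nonneg_left _ hs₀pos.le
          rw [hCtot]; linarith
      _ < min εV εU := hs₀C
      _ ≤ εV := min_le_left _ _
  have hp2V : p2 ∈ V := by
    apply hεVsub
    rw [Metric.mem_ball]
    have hd1 : dist p2 p1 ≤ t₀ * Ce := by
      rw [hp2, dist_comm, Prod.dist_eq]
      apply max_le
      · show dist p1.1 (p1.1 + t₀ • α) ≤ t₀ * Ce
        rw [dist_comm]
        apply dist_add_smul_le _ _ ht₀pos.le
          (mul_nonneg ht₀pos.le (by linarith)) fun j => ?_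
        rw [hCe]
        have := Finset.single_le_sum (f := fun j => |α j|)
          (fun j _ => abs_nonneg _) (Finset.mem_univ j)
        linarith
      · show dist p1.2 (p1.2 + t₀ • βt) ≤ t₀ * Ce
        rw [dist_comm]
        apply dist_add_smul_le _ _ ht₀pos.le
          (mul_nonneg ht₀pos.le (by linarith)) fun j => ?_
        rw [hβt]
        by_cases hj : j ∈ D
        · simp only [dif_pos hj]
          have h1 : |β ⟨j, hj⟩| ≤ ‖β‖ := by
            rw [← Real.norm_eq_abs]
            exact norm_le_pi_norm β ⟨j, hj⟩
          linarith
        · simp only [dif_neg hj, abs_zero]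
          linarith
    have hd2 : dist p1 ((zb, bb) : (Fin n → ℝ) × (Fin m → ℝ)) ≤ s₀ * Cq := by
      rw [hp1, dist_comm, Prod.dist_eq]
      apply max_le
      · show dist zb (zb + s₀ • w) ≤ s₀ * Cq
        rw [dist_comm]
        apply dist_add_smul_le _ _ hs₀pos.le
          (mul_nonneg hs₀pos.le (by linarith)) fun j => ?_
        rw [hCq]
        have := Finset.single_le_sum (f := fun j => |w j|)
          (fun j _ => abs_nonneg _) (Finset.mem_univ j)
        linarith
      · show dist bb (bb + s₀ • χ) ≤ s₀ * Cq
        rw [dist_comm]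
        apply dist_add_smul_le _ _ hs₀pos.le
          (mul_nonneg hs₀pos.le (by linarith)) fun j => ?_
        rw [hχ]
        by_cases hj : j ∈ D <;> simp [hj] <;> linarith
    calc dist p2 ((zb, bb) : (Fin n → ℝ) × (Fin m → ℝ)) ≤ dist p2 p1 +
          dist p1 ((zb, bb) : (Fin n → ℝ) × (Fin m → ℝ)) := dist_triangle _ _ _
      _ ≤ t₀ * Ce + s₀ * Cq := add_le_add hd1 hd2
      _ ≤ s₀ * Ce + s₀ * Cq := by
          have := mul_le_mul_of_nonneg_right ht₀s₀ (le_trans zero_le_one hCe1)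
          linarith
      _ ≤ s₀ * Ctot := by
          have heqC : s₀ * Ctot = s₀ * Cq + s₀ * Ce + s₀ * Cu := by rw [hCtot]; ring
          have hCu0 : 0 ≤ s₀ * Cu := mul_nonneg hs₀pos.le (by linarith)
          linarith [heqC]
      _ < min εV εU := hs₀C
      _ ≤ εV := min_le_left _ _
  have hx2U : xb + t₀ • u ∈ U := by
    apply hεUsub
    rw [Metric.mem_ball]
    calc dist (xb + t₀ • u) xb ≤ t₀ * Cu := by
          apply dist_add_smul_le _ _ ht₀pos.le
            (mul_nonneg ht₀pos.le (by linarith)) fun j => ?_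
          rw [hCu]
          have := Finset.single_le_sum (f := fun j => |u j|)
            (fun j _ => abs_nonneg _) (Finset.mem_univ j)
          linarith
      _ ≤ s₀ * Cu := mul_le_mul_of_nonneg_right ht₀s₀ (by linarith)
      _ ≤ s₀ * Ctot := by
          apply mul_le_mul_of_nonneg_left _ hs₀pos.le
          rw [hCtot]; linarith
      _ < min εV εU := hs₀C
      _ ≤ εU := min_le_right _ _
  -- apply the Aubin property
  have hx2proj : xb + t₀ • u ∈ projSet A p2.1 p2.2 := by rw [hproj2]; rfl
  have happ := hprop p1 hp1V p2 hp2V (xb + t₀ • u) ⟨hx2proj, hx2U⟩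
  rw [hproj1, dSet_singleton] at happ
  have hsub : xb + t₀ • u - xb = t₀ • u := by abel
  rw [hsub, enorm_smul, abs_of_nonneg ht₀pos.le] at happ
  -- bound the parameter distance
  have hpd : pDistE p2 p1 ≤ t₀ := by
    apply max_le
    · show eucNorm (p2.1 - p1.1) ≤ t₀
      have : p2.1 - p1.1 = t₀ • α := by rw [hp2]; show p1.1 + t₀ • α - p1.1 = t₀ • α; abel
      rw [this, enorm_smul, abs_of_nonneg ht₀pos.le]
      calc t₀ * eucNorm α ≤ t₀ * 1 := mul_le_mul_of_nonneg_left hα ht₀pos.le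
        _ = t₀ := mul_one _
    · show ‖p2.2 - p1.2‖ ≤ t₀
      have : p2.2 - p1.2 = t₀ • βt := by rw [hp2]; show p1.2 + t₀ • βt - p1.2 = t₀ • βt; abel
      rw [this, norm_smul, Real.norm_eq_abs, abs_of_nonneg ht₀pos.le]
      have hβt1 : ‖βt‖ ≤ 1 := by
        apply pi_norm_le_iff_of_nonneg zero_le_one |>.mpr
        intro i
        rw [hβt, Real.norm_eq_abs]
        by_cases hiD : i ∈ D
        · simp only [dif_pos hiD]
          calc |β ⟨i, hiD⟩| = ‖β ⟨i, hiD⟩‖ := (Real.norm_eq_abs _).symm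
            _ ≤ ‖β‖ := norm_le_pi_norm β _
            _ ≤ 1 := hβ
        · simp [dif_neg hiD]
      calc t₀ * ‖βt‖ ≤ t₀ * 1 := mul_le_mul_of_nonneg_left hβt1 ht₀pos.le
        _ = t₀ := mul_one _
  have hκpd : κ * pDistE p2 p1 ≤ κ * t₀ := mul_le_mul_of_nonneg_left hpd hκ0
  have h2 : t₀ * eucNorm u ≤ κ * pDistE p2 p1 := by
    rw [← ENNReal.ofReal_le_ofReal_iff (mul_nonneg hκ0 (pDistE_nonneg _ _))] at *
    exact happ
  have h3 : t₀ * eucNorm u ≤ κ * t₀ := le_trans h2 hκpd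
  have := (mul_le_mul_iff_right₀ ht₀pos).mp (by linarith : t₀ * eucNorm u ≤ t₀ * κ)
  exact this

end S19

/-- under SCQ at `b̄`, the metric projection `P` has the Aubin property at
`((z̄,b̄),x̄)`, each `A_D A_Dᵀ`, `D ∈ L_{z̄,b̄}(x̄)`, is invertible, and
`lip P((z̄,b̄),x̄)` equals the maximum over `D ∈ L_{z̄,b̄}(x̄)` of
`‖(I_n − A_Dᵀ(A_D A_Dᵀ)⁻¹A_D | A_Dᵀ(A_D A_Dᵀ)⁻¹)‖`. -/
theorem statement19 {n m : ℕ} (hn : 0 < n) (hm : 0 < m)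
    (A : Matrix (Fin m) (Fin n) ℝ) (zb : Fin n → ℝ) (bb : Fin m → ℝ) (xb : Fin n → ℝ)
    (hSl : Slater A bb) (hxb : xb ∈ projSet A zb bb) :
    AubinAt eucNorm (fun p q => pDistE p q)
      (fun p : (Fin n → ℝ) × (Fin m → ℝ) => projSet A p.1 p.2) (zb, bb) xb ∧
    (∀ D ∈ LprojKKT A zb bb xb, IsUnit ((subA A D) * (subA A D)ᵀ)) ∧
    lipMod eucNorm (fun p q => pDistE p q)
      (fun p : (Fin n → ℝ) × (Fin m → ℝ) => projSet A p.1 p.2) (zb, bb) xb =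
      ⨆ D ∈ LprojKKT A zb bb xb, ENNReal.ofReal (opNormE (projLipMat A D)) := by
  classical
  obtain ⟨ε, hεpos, hball⟩ := S19.exists_good_ball hm hSl hxb
  have hpbar_ball : ((zb, bb) : (Fin n → ℝ) × (Fin m → ℝ)) ∈
      Metric.ball ((zb, bb) : (Fin n → ℝ) × (Fin m → ℝ)) ε := Metric.mem_ball_self hεpos
  obtain ⟨D₀, hD₀, -, -⟩ := hball _ hpbar_ball
  set LF : Finset (Finset (Fin m)) :=
    Finset.univ.filter (· ∈ LprojKKT A zb bb xb) with hLF
  have hLmem : ∀ D ∈ LprojKKT A zb bb xb, D ∈ LF := by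
    intro D hD
    rw [hLF]
    exact Finset.mem_filter.mpr ⟨Finset.mem_univ _, hD⟩
  have hmemL : ∀ D ∈ LF, D ∈ LprojKKT A zb bb xb := by
    intro D hD
    rw [hLF] at hD
    exact (Finset.mem_filter.mp hD).2
  have hLFne : LF.Nonempty := ⟨D₀, hLmem D₀ hD₀⟩
  set κs : ℝ := LF.sup' hLFne (fun D => opNormE (projLipMat A D)) with hκs
  have hκs_le : ∀ D ∈ LprojKKT A zb bb xb, opNormE (projLipMat A D) ≤ κs := by
    intro D hD
    rw [hκs]
    exact Finset.le_sup' (fun D => opNormE (projLipMat A D)) (hLmem D hD)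
  have hκs0 : 0 ≤ κs := le_trans (S19.opNormE_nonneg _) (hκs_le D₀ hD₀)
  have hproperty : ∀ p1 ∈ Metric.ball ((zb, bb) : (Fin n → ℝ) × (Fin m → ℝ)) ε,
      ∀ p2 ∈ Metric.ball ((zb, bb) : (Fin n → ℝ) × (Fin m → ℝ)) ε,
      ∀ x2 ∈ (projSet A p2.1 p2.2) ∩ (Set.univ : Set (Fin n → ℝ)),
      dSet eucNorm x2 (projSet A p1.1 p1.2) ≤ ENNReal.ofReal (κs * pDistE p2 p1) := by
    intro p1 hp1 p2 hp2 x2 hx2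
    obtain ⟨D1, hD1, hRD1, hproj1⟩ := hball p1 hp1
    obtain ⟨D2, hD2, hRD2, hproj2⟩ := hball p2 hp2
    have hx2eq : x2 = S19.xD A D2 p2 := by
      have h := hx2.1
      rw [hproj2, Set.mem_singleton_iff] at h
      exact h
    have hkey := S19.upper_estimate hball hκs_le hp1 hp2 hproj1 hproj2
    rw [hproj1, S19.dSet_singleton, hx2eq]
    exact ENNReal.ofReal_le_ofReal hkey
  have hAubin : AubinAt eucNorm (fun p q => pDistE p q)
      (fun p : (Fin n → ℝ) × (Fin m → ℝ) => projSet A p.1 p.2) (zb, bb) xb :=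
    ⟨κs, hκs0, Metric.ball _ ε, Metric.ball_mem_nhds _ hεpos, Set.univ,
      Filter.univ_mem, hproperty⟩
  refine ⟨hAubin, fun D hD => gram_isUnit A D hD.2.1, ?_⟩
  have hκsS : κs ∈ {κ : ℝ | 0 ≤ κ ∧
      ∃ V ∈ 𝓝 ((zb, bb) : (Fin n → ℝ) × (Fin m → ℝ)), ∃ U ∈ 𝓝 xb,
      ∀ p1 ∈ V, ∀ p2 ∈ V, ∀ x2 ∈
        (fun p : (Fin n → ℝ) × (Fin m → ℝ) => projSet A p.1 p.2) p2 ∩ U,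
        dSet eucNorm x2 ((fun p : (Fin n → ℝ) × (Fin m → ℝ) => projSet A p.1 p.2) p1) ≤
          ENNReal.ofReal (κ * (fun p q => pDistE p q) p2 p1)} :=
    ⟨hκs0, Metric.ball _ ε, Metric.ball_mem_nhds _ hεpos, Set.univ,
      Filter.univ_mem, hproperty⟩
  apply le_antisymm
  · have h1 : lipMod eucNorm (fun p q => pDistE p q)
        (fun p : (Fin n → ℝ) × (Fin m → ℝ) => projSet A p.1 p.2) (zb, bb) xb ≤
        ENNReal.ofReal κs := by
      apply iInf₂_le κs hκsS
    obtain ⟨Dstar, hDstar, hstar⟩ :=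
      Finset.exists_mem_eq_sup' hLFne (fun D => opNormE (projLipMat A D))
    have h2 : ENNReal.ofReal κs ≤
        ⨆ D ∈ LprojKKT A zb bb xb, ENNReal.ofReal (opNormE (projLipMat A D)) := by
      have heq : κs = opNormE (projLipMat A Dstar) := by rw [hκs, hstar]
      rw [heq]
      exact le_iSup₂ (f := fun D (_ : D ∈ LprojKKT A zb bb xb) =>
        ENNReal.ofReal (opNormE (projLipMat A D))) Dstar (hmemL Dstar hDstar)
    exact le_trans h1 h2
  · apply le_iInf₂
    intro κ hκ
    obtain ⟨hκ0, V, hV, U, hU, hprop⟩ := hκ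
    apply iSup₂_le
    intro D hD
    exact ENNReal.ofReal_le_ofReal (S19.lower_bound hxb hD hκ0 hV hU hprop)
end
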